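/- arXiv:2312.17148 — 3 statements merged into one kernel-verified Lean document; each statement's English description precedes it below -/
import Mathlib

section
/- As a formal power series identity in x and s: Σ_{k≥1, n≥1} ζ({1}^{k−1}, \overline{n+1}) · x^k · s^n = 1 − ₂F₁(x, −s; 1−s; −1), where ζ({1}^{k−1}, \overline{n+1}) = Σ_{0 < n_1 < ⋯ < n_k} (−1)^{n_k} / (n_1 ⋯ n_{k−1} · n_k^{n+1}) is an alternating multiple zeta value. -/
open scoped Nat

/-- The Gauss hypergeometric series `₂F₁(a,b;c;z) = ∑ (a)ₘ(b)ₘ/((c)ₘ m!) zᵐ`,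
where `(q)ₘ` is the Pochhammer symbol (rising factorial). -/
noncomputable def hyp2F1 (a b c z : ℝ) : ℝ :=
  ∑' m : ℕ, (ascPochhammer ℝ m).eval a * (ascPochhammer ℝ m).eval b
      / ((ascPochhammer ℝ m).eval c * (m ! : ℝ)) * z ^ m

/-- The alternating multiple zeta value `ζ({1}^d, overline{n+1})
= ∑_{0<n₁<⋯<n_{d+1}} (-1)^{n_{d+1}} / (n₁⋯n_d · n_{d+1}^{n+1})`
(depth `d+1`, with `d` leading ones and final entry `n+1` carrying the sign `-1`). -/
noncomputable def azeta (d n : ℕ) : ℝ :=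
  ∑' f : {f : Fin (d + 1) → ℕ // StrictMono f ∧ 0 < f 0},
    (-1 : ℝ) ^ (f.1 (Fin.last d)) /
      ((∏ i : Fin d, (f.1 i.castSucc : ℝ)) * (f.1 (Fin.last d) : ℝ) ^ (n + 1))

open Finset

/-- `hcoef k m = e_k(1, 1/2, …, 1/(m-1))`, the elementary symmetric function of inverses. -/
noncomputable def hcoef (k m : ℕ) : ℝ :=
  ∑ S ∈ (Finset.Ioo 0 m).powersetCard k, ∏ j ∈ S, (j : ℝ)⁻¹

lemma hcoef_nonneg (k m : ℕ) : 0 ≤ hcoef k m := by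
  refine Finset.sum_nonneg fun S _ => Finset.prod_nonneg fun j _ => by positivity

lemma hcoef_eq_zero {k m : ℕ} (h : m ≤ k) (hm : 0 < m) : hcoef k m = 0 := by
  unfold hcoef
  have hc : (Finset.Ioo 0 m).card < k := by rw [Nat.card_Ioo]; omega
  rw [Finset.powersetCard_eq_empty.mpr hc, Finset.sum_empty]

lemma poch_prod (m : ℕ) (x : ℝ) :
    (ascPochhammer ℝ m).eval x = ∏ i ∈ Finset.range m, (x + i) := by
  induction m with
  | zero => simp
  | succ m ih => rw [ascPochhammer_succ_eval, ih, Finset.prod_range_succ]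

lemma range_succ_eq (m : ℕ) : Finset.range (m + 1) = insert 0 (Finset.Ioo 0 (m + 1)) := by
  ext a; simp only [Finset.mem_range, Finset.mem_insert, Finset.mem_Ioo]; omega

lemma zero_not_mem_Ioo (m : ℕ) : (0 : ℕ) ∉ Finset.Ioo 0 (m + 1) := by simp

lemma prod_Ioo_nat (m : ℕ) : (∏ j ∈ Finset.Ioo 0 (m + 1), (j : ℝ)) = (m ! : ℝ) := by
  have : Finset.Ioo 0 (m + 1) = Finset.Ico 1 (m + 1) := by ext a; simp; omega
  rw [this, ← Nat.cast_prod, Finset.prod_Ico_id_eq_factorial]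

lemma prodForm (t : ℝ) (m : ℕ) :
    ∑ k ∈ Finset.range (m + 1), hcoef k (m + 1) * t ^ k
      = ∏ j ∈ Finset.Ioo 0 (m + 1), (1 + t * (j : ℝ)⁻¹) := by
  have h1 : ∀ j ∈ Finset.Ioo 0 (m+1), (1 + t * (j:ℝ)⁻¹) = (t * (j:ℝ)⁻¹ + 1) := by
    intro j _; ring
  rw [Finset.prod_congr rfl h1, Finset.prod_add]
  have hcard : (Finset.Ioo 0 (m+1)).card = m := by rw [Nat.card_Ioo]; omega
  rw [Finset.sum_powerset, hcard]
  refine Finset.sum_congr rfl fun k hk => ?_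
  rw [hcoef, Finset.sum_mul]
  refine Finset.sum_congr rfl fun S hS => ?_
  have hSc : S.card = k := (Finset.mem_powersetCard.mp hS).2
  rw [Finset.prod_const_one, mul_one, Finset.prod_mul_distrib, Finset.prod_const, hSc]
  exact mul_comm _ _

lemma poch_eq (m : ℕ) (x : ℝ) :
    (ascPochhammer ℝ (m + 1)).eval x
      = x * (m ! : ℝ) * ∏ j ∈ Finset.Ioo 0 (m + 1), (1 + x * (j : ℝ)⁻¹) := by
  rw [poch_prod, range_succ_eq, Finset.prod_insert (zero_not_mem_Ioo m)]
  have : ∀ j ∈ Finset.Ioo 0 (m+1), (x + (j:ℕ)) = (j : ℝ) * (1 + x * (j:ℝ)⁻¹) := by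
    intro j hj
    have hj0 : (0:ℕ) < j := (Finset.mem_Ioo.mp hj).1
    have : (j:ℝ) ≠ 0 := Nat.cast_ne_zero.mpr hj0.ne'
    field_simp
    ring
  rw [Finset.prod_congr rfl this, Finset.prod_mul_distrib, prod_Ioo_nat]
  push_cast
  ring

lemma harm_bound (m : ℕ) :
    ∑ j ∈ Finset.Ioo 0 (m + 1), ((j : ℝ))⁻¹ ≤ 1 + Real.log (m + 1) := by
  have h1 : Finset.Ioo 0 (m+1) = Finset.Ico 1 (m+1) := by ext a; simp; omega
  have h2 : ∑ j ∈ Finset.Ioo 0 (m+1), ((j:ℝ))⁻¹ = (harmonic m : ℝ) := by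
    rw [h1, Finset.sum_Ico_eq_sum_range]
    simp only [Nat.add_sub_cancel]
    rw [harmonic]
    push_cast
    refine Finset.sum_congr rfl fun i _ => ?_
    rw [add_comm 1 (i:ℝ)]
  rw [h2]
  refine (harmonic_le_one_add_log m).trans ?_
  have : Real.log m ≤ Real.log (m+1) := by
    rcases Nat.eq_zero_or_pos m with h | h
    · subst h; simp
    · exact Real.log_le_log (by positivity) (by push_cast; linarith)
  push_cast at this ⊢
  linarith

lemma prodBound {t : ℝ} (ht0 : 0 ≤ t) (ht1 : t ≤ 1) (m : ℕ) :
    ∏ j ∈ Finset.Ioo 0 (m + 1), (1 + t * (j : ℝ)⁻¹)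
      ≤ Real.exp 1 * ((m + 1 : ℕ) : ℝ) ^ (t : ℝ) := by
  have step1 : ∏ j ∈ Finset.Ioo 0 (m + 1), (1 + t * (j : ℝ)⁻¹)
      ≤ ∏ j ∈ Finset.Ioo 0 (m + 1), Real.exp (t * (j : ℝ)⁻¹) := by
    refine Finset.prod_le_prod (fun j hj => by positivity) (fun j hj => ?_)
    have := Real.add_one_le_exp (t * (j:ℝ)⁻¹)
    linarith
  have step2 : ∏ j ∈ Finset.Ioo 0 (m + 1), Real.exp (t * (j : ℝ)⁻¹)
      = Real.exp (t * ∑ j ∈ Finset.Ioo 0 (m + 1), ((j : ℝ))⁻¹) := by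
    rw [← Real.exp_sum, Finset.mul_sum]
  have hlog : 0 ≤ Real.log ((m+1 : ℕ) : ℝ) := Real.log_nonneg (by push_cast; linarith)
  have step3 : Real.exp (t * ∑ j ∈ Finset.Ioo 0 (m + 1), ((j : ℝ))⁻¹)
      ≤ Real.exp (1 + t * Real.log ((m+1:ℕ):ℝ)) := by
    rw [Real.exp_le_exp]
    have hb := harm_bound m
    have hsum_nonneg : 0 ≤ ∑ j ∈ Finset.Ioo 0 (m + 1), ((j : ℝ))⁻¹ :=
      Finset.sum_nonneg fun j _ => by positivity
    have : t * ∑ j ∈ Finset.Ioo 0 (m + 1), ((j : ℝ))⁻¹ ≤ t * (1 + Real.log (m+1)) :=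
      mul_le_mul_of_nonneg_left hb ht0
    push_cast at this ⊢
    nlinarith [mul_le_mul_of_nonneg_right ht1 hlog]
  have step4 : Real.exp (1 + t * Real.log ((m+1:ℕ):ℝ))
      = Real.exp 1 * ((m + 1 : ℕ) : ℝ) ^ (t : ℝ) := by
    rw [Real.exp_add]
    congr 1
    rw [Real.rpow_def_of_pos (by positivity), mul_comm]
  calc ∏ j ∈ Finset.Ioo 0 (m + 1), (1 + t * (j : ℝ)⁻¹)
      ≤ _ := step1
    _ = _ := step2
    _ ≤ _ := step3
    _ = _ := step4

lemma hcoef_le (k m : ℕ) :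
    hcoef k (m + 1) ≤ 2 ^ k * Real.exp 1 * ((m + 1 : ℕ) : ℝ) ^ ((1:ℝ)/2) := by
  rcases le_or_gt (m + 1) k with h | h
  · rw [hcoef_eq_zero h (Nat.succ_pos m)]; positivity
  · have hk : k ∈ Finset.range (m + 1) := Finset.mem_range.mpr h
    have h1 : hcoef k (m+1) * ((1:ℝ)/2) ^ k
        ≤ ∑ k' ∈ Finset.range (m + 1), hcoef k' (m + 1) * ((1:ℝ)/2) ^ k' :=
      Finset.single_le_sum (fun i _ => mul_nonneg (hcoef_nonneg i (m+1)) (by positivity)) hk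
    have h3 := (h1.trans (le_of_eq (prodForm ((1:ℝ)/2) m))).trans
      (prodBound (by norm_num) (by norm_num) m)
    have h4 : Real.exp 1 * ((m + 1 : ℕ) : ℝ) ^ ((1:ℝ)/2) ≤
        Real.exp 1 * ((m + 1 : ℕ) : ℝ) ^ ((1:ℝ)/2) := le_refl _
    have hpow : (0:ℝ) < ((1:ℝ)/2) ^ k := by positivity
    calc hcoef k (m+1) = hcoef k (m+1) * ((1:ℝ)/2)^k * 2^k := by
          rw [mul_assoc, ← mul_pow]; norm_num
      _ ≤ Real.exp 1 * ((m + 1 : ℕ) : ℝ) ^ ((1:ℝ)/2) * 2^k := by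
          refine mul_le_mul_of_nonneg_right h3 (by positivity)
      _ = 2 ^ k * Real.exp 1 * ((m + 1 : ℕ) : ℝ) ^ ((1:ℝ)/2) := by ring

lemma mem_pc {k m : ℕ} {S : Finset ℕ} (hS : S ∈ (Finset.Ioo 0 (m+1)).powersetCard k) :
    S ⊆ Finset.Ioo 0 (m+1) ∧ S.card = k := Finset.mem_powersetCard.mp hS

lemma not_mem_T {k m : ℕ} {S : Finset ℕ} (hS : S ∈ (Finset.Ioo 0 (m+1)).powersetCard k) :
    m + 1 ∉ S := fun h => by
  have := (mem_pc hS).1 h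
  simp [Finset.mem_Ioo] at this

lemma card_T {k m : ℕ} {S : Finset ℕ} (hS : S ∈ (Finset.Ioo 0 (m+1)).powersetCard k) :
    (insert (m+1) S).card = k + 1 := by
  rw [Finset.card_insert_of_notMem (not_mem_T hS), (mem_pc hS).2]

def Phi (k : ℕ) (σ : Σ m : ℕ, {S : Finset ℕ // S ∈ (Finset.Ioo 0 (m+1)).powersetCard k}) :
    {f : Fin (k + 1) → ℕ // StrictMono f ∧ 0 < f 0} :=
  ⟨fun i => (insert (σ.1+1) σ.2.1).orderEmbOfFin (card_T σ.2.2) i,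
   ((insert (σ.1+1) σ.2.1).orderEmbOfFin (card_T σ.2.2)).strictMono,
   by
     show 0 < (insert (σ.1+1) σ.2.1).orderEmbOfFin (card_T σ.2.2) 0
     have hmem := Finset.orderEmbOfFin_mem (insert (σ.1+1) σ.2.1) (card_T σ.2.2) 0
     rcases Finset.mem_insert.mp hmem with h | h
     · rw [h]; exact Nat.succ_pos _
     · exact (Finset.mem_Ioo.mp ((mem_pc σ.2.2).1 h)).1⟩

lemma Phi_image {k m : ℕ} {S : Finset ℕ} (hS : S ∈ (Finset.Ioo 0 (m+1)).powersetCard k) :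
    Finset.image (fun i => (insert (m+1) S).orderEmbOfFin (card_T hS) i) Finset.univ
      = insert (m+1) S := by
  apply Finset.coe_injective
  rw [Finset.coe_image, Finset.coe_univ, Set.image_univ]
  exact Finset.range_orderEmbOfFin _ _

lemma mem_T_le {k m : ℕ} {S : Finset ℕ} (hS : S ∈ (Finset.Ioo 0 (m+1)).powersetCard k)
    {a : ℕ} (ha : a ∈ insert (m+1) S) : a ≤ m + 1 := by
  rcases Finset.mem_insert.mp ha with h | h
  · omega
  · exact le_of_lt (Finset.mem_Ioo.mp ((mem_pc hS).1 h)).2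

lemma Phi_last {k m : ℕ} {S : Finset ℕ} (hS : S ∈ (Finset.Ioo 0 (m+1)).powersetCard k) :
    (insert (m+1) S).orderEmbOfFin (card_T hS) (Fin.last k) = m + 1 := by
  have h1 : m + 1 ∈ Finset.image
      (fun i => (insert (m+1) S).orderEmbOfFin (card_T hS) i) Finset.univ := by
    rw [Phi_image hS]; exact Finset.mem_insert_self _ _
  obtain ⟨i, _, hi⟩ := Finset.mem_image.mp h1
  have h2 : (insert (m+1) S).orderEmbOfFin (card_T hS) i
      ≤ (insert (m+1) S).orderEmbOfFin (card_T hS) (Fin.last k) :=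
    ((insert (m+1) S).orderEmbOfFin (card_T hS)).monotone (Fin.le_last i)
  have h3 : (insert (m+1) S).orderEmbOfFin (card_T hS) (Fin.last k) ≤ m + 1 :=
    mem_T_le hS (Finset.orderEmbOfFin_mem _ _ _)
  omega

lemma Phi_castSucc_image {k m : ℕ} {S : Finset ℕ}
    (hS : S ∈ (Finset.Ioo 0 (m+1)).powersetCard k) :
    Finset.image (fun i : Fin k => (insert (m+1) S).orderEmbOfFin (card_T hS) i.castSucc)
      Finset.univ = S := by
  have hT : (insert (m+1) S).erase (m+1) = S := Finset.erase_insert (not_mem_T hS)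
  have key : Finset.image
      (fun i : Fin k => (insert (m+1) S).orderEmbOfFin (card_T hS) i.castSucc)
      Finset.univ = (insert (m+1) S).erase (m+1) := by
    ext j
    simp only [Finset.mem_image, Finset.mem_univ, true_and, Finset.mem_erase]
    constructor
    · rintro ⟨i, rfl⟩
      have hlt : (insert (m+1) S).orderEmbOfFin (card_T hS) i.castSucc
          < (insert (m+1) S).orderEmbOfFin (card_T hS) (Fin.last k) :=
        ((insert (m+1) S).orderEmbOfFin (card_T hS)).strictMono (Fin.castSucc_lt_last i)
      rw [Phi_last hS] at hlt
      exact ⟨by omega, Finset.orderEmbOfFin_mem _ _ _⟩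
    · rintro ⟨hne, hmem⟩
      have : j ∈ Finset.image
          (fun i => (insert (m+1) S).orderEmbOfFin (card_T hS) i) Finset.univ := by
        rw [Phi_image hS]; exact hmem
      obtain ⟨i, _, rfl⟩ := Finset.mem_image.mp this
      have hi : i ≠ Fin.last k := by
        intro h; rw [h, Phi_last hS] at hne; exact hne rfl
      obtain ⟨i', hi'⟩ := Fin.exists_castSucc_eq.mpr hi
      exact ⟨i', by rw [hi']⟩
  rw [key, hT]

lemma Phi_prod {k m : ℕ} {S : Finset ℕ}
    (hS : S ∈ (Finset.Ioo 0 (m+1)).powersetCard k) :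
    ∏ i : Fin k, (((insert (m+1) S).orderEmbOfFin (card_T hS) i.castSucc : ℕ) : ℝ)
      = ∏ j ∈ S, (j : ℝ) := by
  conv_rhs => rw [← Phi_castSucc_image hS]
  rw [Finset.prod_image]
  intro a _ b _ hab
  exact Fin.castSucc_injective k
    (((insert (m+1) S).orderEmbOfFin (card_T hS)).injective hab)

lemma image_univ_f {k : ℕ} (f : Fin (k+1) → ℕ) :
    Finset.image f Finset.univ
      = insert (f (Fin.last k))
          (Finset.image (fun i : Fin k => f i.castSucc) Finset.univ) := by
  ext a
  simp only [Finset.mem_image, Finset.mem_univ, true_and, Finset.mem_insert]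
  constructor
  · rintro ⟨i, rfl⟩
    rcases eq_or_ne i (Fin.last k) with h | h
    · exact Or.inl (by rw [h])
    · obtain ⟨i', rfl⟩ := Fin.exists_castSucc_eq.mpr h
      exact Or.inr ⟨i', rfl⟩
  · rintro (h | ⟨i, rfl⟩)
    · exact ⟨Fin.last k, h.symm⟩
    · exact ⟨i.castSucc, rfl⟩

lemma Phi_bij (k : ℕ) : Function.Bijective (Phi k) := by
  constructor
  · rintro ⟨m, S, hS⟩ ⟨m', S', hS'⟩ h
    have hf := congrArg Subtype.val h
    simp only [Phi] at hf
    have hlast := congrFun hf (Fin.last k)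
    rw [Phi_last hS, Phi_last hS'] at hlast
    have hm : m = m' := by omega
    subst hm
    have h2 : S = S' := by
      have hS1 := Phi_castSucc_image hS
      have hS2 := Phi_castSucc_image hS'
      rw [← hS1, ← hS2]
      congr 1
      funext i
      exact congrFun hf i.castSucc
    subst h2
    rfl
  · rintro ⟨f, hmono, hpos⟩
    have h1 : 1 ≤ f (Fin.last k) := by
      have : f 0 ≤ f (Fin.last k) := hmono.monotone (Fin.le_last 0)
      omega
    set m := f (Fin.last k) - 1 with hm
    have hm1 : m + 1 = f (Fin.last k) := by omega
    have hinj : Function.Injective (fun i : Fin k => f i.castSucc) := by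
      intro a b hab
      exact Fin.castSucc_injective k (hmono.injective hab)
    set S := Finset.image (fun i : Fin k => f i.castSucc) Finset.univ with hSdef
    have hS : S ∈ (Finset.Ioo 0 (m+1)).powersetCard k := by
      rw [Finset.mem_powersetCard]
      constructor
      · intro j hj
        obtain ⟨i, _, rfl⟩ := Finset.mem_image.mp hj
        rw [Finset.mem_Ioo]
        refine ⟨?_, ?_⟩
        · have : f 0 ≤ f i.castSucc := hmono.monotone (Fin.zero_le _)
          omega
        · rw [hm1]
          exact hmono (Fin.castSucc_lt_last i)
      · rw [Finset.card_image_of_injective _ hinj, Finset.card_univ, Fintype.card_fin]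
    refine ⟨⟨m, ⟨S, hS⟩⟩, ?_⟩
    apply Subtype.ext
    have himg : insert (m+1) S = Finset.image f Finset.univ := by
      rw [image_univ_f f, hm1]
    have hfs : ∀ i, f i ∈ insert (m+1) S := by
      intro i; rw [himg]; exact Finset.mem_image_of_mem f (Finset.mem_univ i)
    have := Finset.orderEmbOfFin_unique (card_T hS) hfs hmono
    exact this.symm

lemma hcoef_div_le (k n m : ℕ) :
    hcoef k (m+1) / ((m+1:ℕ):ℝ)^(n+2)
      ≤ (2^k * Real.exp 1) * ((m+1:ℕ):ℝ)^(-(3/2) : ℝ) := by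
  set M : ℝ := ((m+1:ℕ):ℝ) with hMdef
  have hM : 1 ≤ M := by rw [hMdef]; push_cast; linarith
  have hM0 : (0:ℝ) < M := by linarith
  have h1 : hcoef k (m+1) ≤ 2^k * Real.exp 1 * M ^ ((1:ℝ)/2) := hcoef_le k m
  have h2 : M^(2:ℕ) ≤ M^(n+2) := pow_le_pow_right₀ hM (by omega)
  have h3 : hcoef k (m+1) / M^(n+2) ≤ hcoef k (m+1) / M^(2:ℕ) :=
    div_le_div_of_nonneg_left (hcoef_nonneg _ _) (by positivity) h2
  have h4 : hcoef k (m+1) / M^(2:ℕ) ≤ (2^k * Real.exp 1 * M ^ ((1:ℝ)/2)) / M^(2:ℕ) :=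
    div_le_div_of_nonneg_right h1 (by positivity)
  refine h3.trans (h4.trans (le_of_eq ?_))
  rw [mul_div_assoc]
  congr 1
  rw [show M^(2:ℕ) = M^((2:ℕ):ℝ) from (Real.rpow_natCast M 2).symm, ← Real.rpow_sub hM0]
  norm_num

lemma summable_bound : Summable (fun m : ℕ => ((m+1:ℕ):ℝ)^(-(3/2) : ℝ)) := by
  have h := Real.summable_nat_rpow (p := -(3/2)).mpr (by norm_num)
  exact (summable_nat_add_iff 1).mpr h

lemma azeta_eq (k n : ℕ) :
    azeta k (n + 1)
      = ∑' m : ℕ, (-1:ℝ)^(m+1) * hcoef k (m+1) / ((m+1:ℕ):ℝ)^(n+2) := by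
  classical
  set g : (Σ m : ℕ, {S : Finset ℕ // S ∈ (Finset.Ioo 0 (m+1)).powersetCard k}) → ℝ :=
    fun σ => (-1:ℝ)^(σ.1+1) / ((∏ j ∈ σ.2.1, (j:ℝ)) * ((σ.1+1:ℕ):ℝ)^(n+2)) with hgdef
  have habs : ∀ σ, |g σ| = (∏ j ∈ σ.2.1, (j:ℝ)⁻¹) / ((σ.1+1:ℕ):ℝ)^(n+2) := by
    rintro ⟨m, S, hS⟩
    have hprod : (0:ℝ) < ∏ j ∈ S, (j:ℝ) := by
      refine Finset.prod_pos fun j hj => ?_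
      have := (Finset.mem_Ioo.mp ((mem_pc hS).1 hj)).1
      exact_mod_cast Nat.cast_pos.mpr this
    rw [hgdef]
    simp only [abs_div, abs_pow, abs_neg, abs_one, one_pow, abs_mul]
    rw [abs_of_pos hprod, Nat.abs_cast, Finset.prod_inv_distrib, one_div, mul_inv,
      div_eq_mul_inv]
  have hfibersum : ∀ m : ℕ,
      ∑' (S : {S : Finset ℕ // S ∈ (Finset.Ioo 0 (m+1)).powersetCard k}), |g ⟨m, S⟩|
        = hcoef k (m+1) / ((m+1:ℕ):ℝ)^(n+2) := by
    intro m
    rw [tsum_congr (fun S => habs ⟨m, S⟩)]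
    rw [Finset.tsum_subtype ((Finset.Ioo 0 (m+1)).powersetCard k)
      (fun S => (∏ j ∈ S, (j:ℝ)⁻¹) / ((m+1:ℕ):ℝ)^(n+2))]
    rw [← Finset.sum_div, hcoef]
  have hgsum : Summable g := by
    rw [← summable_abs_iff]
    refine (summable_sigma_of_nonneg (fun σ => abs_nonneg _)).mpr ⟨fun m => .of_finite, ?_⟩
    refine Summable.of_nonneg_of_le (fun m => tsum_nonneg (fun S => abs_nonneg _))
      (fun m => ?_) (summable_bound.mul_left (2^k * Real.exp 1))
    rw [hfibersum m]
    exact hcoef_div_le k n m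
  have hterm : ∀ σ, (fun f : {f : Fin (k + 1) → ℕ // StrictMono f ∧ 0 < f 0} =>
      (-1 : ℝ) ^ (f.1 (Fin.last k)) /
        ((∏ i : Fin k, (f.1 i.castSucc : ℝ)) * (f.1 (Fin.last k) : ℝ) ^ (n + 1 + 1)))
      (Phi k σ) = g σ := by
    rintro ⟨m, S, hS⟩
    simp only [Phi, hgdef]
    rw [Phi_prod hS, Phi_last hS]
  rw [azeta, ← (Equiv.ofBijective (Phi k) (Phi_bij k)).tsum_eq]
  have hstep : ∑' (σ : Σ m : ℕ, {S : Finset ℕ // S ∈ (Finset.Ioo 0 (m+1)).powersetCard k}),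
      g σ = ∑' m : ℕ, (-1:ℝ)^(m+1) * hcoef k (m+1) / ((m+1:ℕ):ℝ)^(n+2) := by
    rw [Summable.tsum_sigma hgsum]
    refine tsum_congr fun m => ?_
    rw [Finset.tsum_subtype ((Finset.Ioo 0 (m+1)).powersetCard k)
      (fun S => (-1:ℝ)^(m+1) / ((∏ j ∈ S, (j:ℝ)) * ((m+1:ℕ):ℝ)^(n+2)))]
    rw [hcoef, Finset.mul_sum, Finset.sum_div]
    refine Finset.sum_congr rfl fun S hS => ?_
    rw [← div_div, div_eq_mul_inv ((-1:ℝ)^(m+1)), ← Finset.prod_inv_distrib]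
  rw [← hstep]
  exact tsum_congr fun σ => hterm σ

noncomputable def Gf (x s : ℝ) (k n m : ℕ) : ℝ :=
  (-1:ℝ)^m * hcoef k m * x^(k+1) * s^(n+1) / (m:ℝ)^(n+2)

lemma Gf_zero (x s : ℝ) (k n : ℕ) : Gf x s k n 0 = 0 := by
  simp [Gf]

lemma abs_Gf (x s : ℝ) (k n m : ℕ) :
    |Gf x s k n m| = hcoef k m * |x|^(k+1) * |s|^(n+1) / (m:ℝ)^(n+2) := by
  simp only [Gf, abs_div, abs_mul, abs_pow, abs_neg, abs_one, one_pow, one_mul, Nat.abs_cast,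
    abs_of_nonneg (hcoef_nonneg k m)]

lemma geo_summable {s : ℝ} (hs : |s| < 1) {M : ℝ} (hM : 1 ≤ M) :
    Summable (fun n : ℕ => s^(n+1) / M^(n+2)) := by
  have hM0 : (0:ℝ) < M := lt_of_lt_of_le one_pos hM
  have hr : |s / M| < 1 := by
    rw [abs_div, abs_of_pos hM0]
    exact lt_of_le_of_lt (div_le_self (abs_nonneg s) hM) hs
  have hfun : (fun n : ℕ => s^(n+1)/M^(n+2)) = fun n => (s/M^2) * (s/M)^n := by
    funext n
    rw [div_pow]
    field_simp
    ring
  rw [hfun]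
  exact (summable_geometric_of_abs_lt_one hr).mul_left _

lemma geo_tsum {s : ℝ} (hs : |s| < 1) {M : ℝ} (hM : 1 ≤ M) :
    ∑' n : ℕ, s^(n+1) / M^(n+2) = s / (M * (M - s)) := by
  have hM0 : (0:ℝ) < M := lt_of_lt_of_le one_pos hM
  have hs1 : s < 1 := lt_of_le_of_lt (le_abs_self s) hs
  have hMs : (0:ℝ) < M - s := by linarith
  have hr : |s / M| < 1 := by
    rw [abs_div, abs_of_pos hM0]
    exact lt_of_le_of_lt (div_le_self (abs_nonneg s) hM) hs
  have hfun : (fun n : ℕ => s^(n+1)/M^(n+2)) = fun n => (s/M^2) * (s/M)^n := by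
    funext n
    rw [div_pow]
    field_simp
    ring
  rw [hfun, tsum_mul_left, tsum_geometric_of_abs_lt_one hr]
  have h2 : (1:ℝ) - s/M = (M-s)/M := by field_simp
  rw [h2, inv_div]
  field_simp

lemma summable_Gf {x s : ℝ} (hx : |x| < 1) (hs : |s| < 1) (k n : ℕ) :
    Summable (fun m => Gf x s k n m) := by
  apply (summable_nat_add_iff 1).mp
  apply Summable.of_norm_bounded
    (g := fun m => (2^k * Real.exp 1) * ((m+1:ℕ):ℝ)^(-(3/2) : ℝ))
    (summable_bound.mul_left _)
  intro m
  rw [Real.norm_eq_abs, abs_Gf]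
  have hx1 : |x|^(k+1) ≤ 1 := pow_le_one₀ (abs_nonneg x) hx.le
  have hs1 : |s|^(n+1) ≤ 1 := pow_le_one₀ (abs_nonneg s) hs.le
  have h0 := hcoef_nonneg k (m+1)
  have h1 : hcoef k (m+1) * |x|^(k+1) * |s|^(n+1) ≤ hcoef k (m+1) := by
    have ha : (0:ℝ) ≤ hcoef k (m+1) * |x|^(k+1) :=
      mul_nonneg h0 (pow_nonneg (abs_nonneg x) (k+1))
    calc hcoef k (m+1) * |x|^(k+1) * |s|^(n+1)
        ≤ hcoef k (m+1) * |x|^(k+1) * 1 := mul_le_mul_of_nonneg_left hs1 ha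
      _ = hcoef k (m+1) * |x|^(k+1) := mul_one _
      _ ≤ hcoef k (m+1) * 1 := mul_le_mul_of_nonneg_left hx1 h0
      _ = hcoef k (m+1) := mul_one _
  calc hcoef k (m+1) * |x|^(k+1) * |s|^(n+1) / ((m+1:ℕ):ℝ)^(n+2)
      ≤ hcoef k (m+1) / ((m+1:ℕ):ℝ)^(n+2) :=
        div_le_div_of_nonneg_right h1 (by positivity)
    _ ≤ _ := hcoef_div_le k n m

set_option maxHeartbeats 2000000 in
/-- Generating series of `ζ({1}^{k-1}, overline{n+1})`:
`∑_{k,n≥1} ζ({1}^{k-1}, overline{n+1}) x^k s^n = 1 − ₂F₁(x,-s;1-s;-1)`. -/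
theorem azeta_generating_series (x s : ℝ) (hx : |x| < 1) (hs : |s| < 1) :
    ∑' p : ℕ × ℕ, azeta p.1 (p.2 + 1) * x ^ (p.1 + 1) * s ^ (p.2 + 1)
      = 1 - hyp2F1 x (-s) (1 - s) (-1) := by
  classical
  have hs1 : s < 1 := lt_of_le_of_lt (le_abs_self s) hs
  have hM1 : ∀ m : ℕ, (1:ℝ) ≤ ((m+1:ℕ):ℝ) := fun m =>
    Nat.one_le_cast.mpr (Nat.succ_le_succ (Nat.zero_le m))
  have hM0 : ∀ m : ℕ, (0:ℝ) < ((m+1:ℕ):ℝ) := fun m => lt_of_lt_of_le one_pos (hM1 m)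
  set f : ℕ → ℕ × ℕ → ℝ := fun m p => Gf x s p.1 p.2 m with hfdef
  -- u-summability (finite support)
  have hu_sum : ∀ (c : ℝ) (m : ℕ),
      Summable (fun k : ℕ => c * hcoef k (m+1) * x^(k+1)) := by
    intro c m
    apply summable_of_ne_finset_zero (s := Finset.range (m+1))
    intro k hk
    have hk' : m+1 ≤ k := by
      by_contra h; exact hk (Finset.mem_range.mpr (by omega))
    rw [hcoef_eq_zero hk' (Nat.succ_pos m), mul_zero, zero_mul]
  have hu_abs_sum : ∀ m : ℕ, Summable (fun k : ℕ => hcoef k (m+1) * |x|^(k+1)) := by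
    intro m
    apply summable_of_ne_finset_zero (s := Finset.range (m+1))
    intro k hk
    have hk' : m+1 ≤ k := by
      by_contra h; exact hk (Finset.mem_range.mpr (by omega))
    rw [hcoef_eq_zero hk' (Nat.succ_pos m), zero_mul]
  -- slice abs-summability and identity
  have habs' : ∀ (m : ℕ) (p : ℕ × ℕ), |f m p|
      = (hcoef p.1 m * |x|^(p.1+1)) * (|s|^(p.2+1) / (m:ℝ)^(p.2+2)) := by
    intro m p
    rw [hfdef]
    show |Gf x s p.1 p.2 m| = _
    rw [abs_Gf]
    ring
  have hss : ∀ m : ℕ, Summable (fun n : ℕ => |s|^(n+1) / ((m+1:ℕ):ℝ)^(n+2)) :=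
    fun m => geo_summable (by rwa [abs_abs]) (hM1 m)
  have hslice_abs : ∀ m : ℕ, Summable (fun p : ℕ × ℕ => |f (m+1) p|) := by
    intro m
    refine Summable.congr (Summable.mul_of_nonneg (hu_abs_sum m) (hss m)
      (fun k => mul_nonneg (hcoef_nonneg _ _) (pow_nonneg (abs_nonneg x) _))
      (fun n => div_nonneg (pow_nonneg (abs_nonneg s) _) (by positivity))) ?_
    intro p
    exact (habs' (m+1) p).symm
  have hslice0 : ∀ p : ℕ × ℕ, f 0 p = 0 := fun p => Gf_zero x s p.1 p.2
  have hsliceAll : ∀ m : ℕ, Summable (f m) := by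
    intro m
    cases m with
    | zero => exact (summable_zero).congr (fun p => (hslice0 p).symm)
    | succ m => exact summable_abs_iff.mp (hslice_abs m)
  have hsumG : ∀ p : ℕ × ℕ, Summable (fun m => f m p) :=
    fun p => summable_Gf hx hs p.1 p.2
  -- u tsum bound
  have hu_tsum_le : ∀ m : ℕ, ∑' k : ℕ, hcoef k (m+1) * |x|^(k+1)
      ≤ Real.exp 1 * ((m+1:ℕ):ℝ) ^ (|x| : ℝ) := by
    intro m
    rw [tsum_eq_sum (s := Finset.range (m+1)) (fun k hk => by
      have hk' : m+1 ≤ k := by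
        by_contra h; exact hk (Finset.mem_range.mpr (by omega))
      rw [hcoef_eq_zero hk' (Nat.succ_pos m), zero_mul])]
    have e1 : ∑ k ∈ Finset.range (m+1), hcoef k (m+1) * |x|^(k+1)
        = |x| * ∑ k ∈ Finset.range (m+1), hcoef k (m+1) * |x|^k := by
      rw [Finset.mul_sum]
      refine Finset.sum_congr rfl fun k _ => ?_
      rw [pow_succ]
      ring
    rw [e1, prodForm |x| m]
    have hprod_nonneg : (0:ℝ) ≤ ∏ j ∈ Finset.Ioo 0 (m+1), (1 + |x| * (j:ℝ)⁻¹) :=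
      Finset.prod_nonneg fun j _ => by positivity
    calc |x| * ∏ j ∈ Finset.Ioo 0 (m+1), (1 + |x| * (j:ℝ)⁻¹)
        ≤ 1 * ∏ j ∈ Finset.Ioo 0 (m+1), (1 + |x| * (j:ℝ)⁻¹) :=
          mul_le_mul_of_nonneg_right hx.le hprod_nonneg
      _ = ∏ j ∈ Finset.Ioo 0 (m+1), (1 + |x| * (j:ℝ)⁻¹) := one_mul _
      _ ≤ _ := prodBound (abs_nonneg x) hx.le m
  -- marginal abs bound
  have hmarg : ∀ m : ℕ, ∑' p : ℕ × ℕ, |f (m+1) p|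
      ≤ (Real.exp 1 / (1 - |s|)) * ((m+1:ℕ):ℝ) ^ ((|x| : ℝ) - 2) := by
    intro m
    set M : ℝ := ((m+1:ℕ):ℝ) with hMdef
    have hMa : 1 ≤ M := hM1 m
    have hMb : 0 < M := hM0 m
    have hprodsum : ∑' p : ℕ × ℕ, |f (m+1) p|
        = (∑' k : ℕ, hcoef k (m+1) * |x|^(k+1)) * (∑' n : ℕ, |s|^(n+1) / M^(n+2)) := by
      rw [tsum_congr (habs' (m+1))]
      exact (tsum_mul_tsum_of_summable_norm
        (summable_norm_iff.mpr (hu_abs_sum m)) (summable_norm_iff.mpr (hss m))).symm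
    rw [hprodsum]
    have hv_tsum : ∑' n : ℕ, |s|^(n+1) / M^(n+2) = |s| / (M * (M - |s|)) :=
      geo_tsum (by rwa [abs_abs]) hMa
    have hMs' : 0 < M - |s| := by linarith [abs_nonneg s, hs]
    have h1s : (0:ℝ) < 1 - |s| := by linarith
    have hvle : |s| / (M * (M - |s|)) ≤ (1/(1-|s|)) * M^(-(2:ℝ)) := by
      have hMM : M ≤ M^(2:ℕ) := by nlinarith
      have key : M^(2:ℕ) * (1 - |s|) ≤ M * (M - |s|) := by
        nlinarith [mul_le_mul_of_nonneg_right hMM (abs_nonneg s)]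
      have h2 : (0:ℝ) < M^(2:ℕ) * (1 - |s|) := mul_pos (by positivity) h1s
      have h3 : |s| / (M * (M - |s|)) ≤ 1 / (M^(2:ℕ) * (1 - |s|)) :=
        div_le_div₀ (by norm_num) hs.le h2 key
      refine h3.trans (le_of_eq ?_)
      rw [Real.rpow_neg hMb.le, show ((2:ℝ)) = ((2:ℕ):ℝ) by norm_num, Real.rpow_natCast,
        one_div, one_div, mul_inv]
      ring
    have hu_nonneg : 0 ≤ ∑' k : ℕ, hcoef k (m+1) * |x|^(k+1) :=
      tsum_nonneg fun k => mul_nonneg (hcoef_nonneg _ _) (pow_nonneg (abs_nonneg x) _)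
    have hv_nonneg : 0 ≤ ∑' n : ℕ, |s|^(n+1) / M^(n+2) :=
      tsum_nonneg fun n => div_nonneg (pow_nonneg (abs_nonneg s) _) (by positivity)
    calc (∑' k : ℕ, hcoef k (m+1) * |x|^(k+1)) * (∑' n : ℕ, |s|^(n+1) / M^(n+2))
        ≤ (Real.exp 1 * M ^ (|x| : ℝ)) * ((1/(1-|s|)) * M^(-(2:ℝ))) := by
          apply mul_le_mul (hu_tsum_le m) _ hv_nonneg (by positivity)
          rw [hv_tsum]
          exact hvle
      _ = (Real.exp 1 / (1 - |s|)) * (M ^ (|x| : ℝ) * M^(-(2:ℝ))) := by ring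
      _ = (Real.exp 1 / (1 - |s|)) * M ^ ((|x| : ℝ) - 2) := by
          rw [show ((|x|:ℝ) - 2) = |x| + -2 by ring, ← Real.rpow_add hMb]
  have hbound_sum : Summable (fun m : ℕ =>
      (Real.exp 1 / (1 - |s|)) * ((m+1:ℕ):ℝ) ^ ((|x| : ℝ) - 2)) := by
    refine Summable.mul_left _ ?_
    exact (summable_nat_add_iff 1).mpr (Real.summable_nat_rpow.mpr (by linarith))
  have hmargsum : Summable (fun m : ℕ => ∑' p : ℕ × ℕ, |f m p|) := by
    apply (summable_nat_add_iff 1).mp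
    exact Summable.of_nonneg_of_le (fun m => tsum_nonneg fun p => abs_nonneg _)
      hmarg hbound_sum
  have hGsum : Summable (Function.uncurry f) := by
    rw [← summable_abs_iff]
    apply (summable_prod_of_nonneg (fun q => abs_nonneg _)).mpr
    constructor
    · intro m
      cases m with
      | zero => exact summable_zero.congr (fun p => by
          show (0:ℝ) = |Function.uncurry f (0, p)|
          rw [Function.uncurry, hslice0 p, abs_zero])
      | succ m => exact hslice_abs m
    · exact hmargsum
  -- F and its summability
  set F : ℕ → ℝ := fun m => ∑' p : ℕ × ℕ, f m p with hFdef
  have hFsum : Summable F :=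
    (hGsum.hasSum.prod_fiberwise (fun m => (hsliceAll m).hasSum)).summable
  have hF0 : F 0 = 0 := by
    rw [hFdef]
    simp only
    rw [tsum_congr hslice0, tsum_zero]
  -- LHS identity
  have hL1 : ∀ p : ℕ × ℕ, azeta p.1 (p.2 + 1) * x ^ (p.1 + 1) * s ^ (p.2 + 1)
      = ∑' m : ℕ, f m p := by
    rintro ⟨k, n⟩
    show azeta k (n + 1) * x ^ (k + 1) * s ^ (n + 1) = ∑' m : ℕ, Gf x s k n m
    rw [azeta_eq k n, ← tsum_mul_right, ← tsum_mul_right]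
    have hterm : ∀ m : ℕ,
        (-1:ℝ)^(m+1) * hcoef k (m+1) / ((m+1:ℕ):ℝ)^(n+2) * x^(k+1) * s^(n+1)
          = Gf x s k n (m+1) := by
      intro m
      rw [Gf]
      ring
    rw [tsum_congr hterm]
    conv_rhs => rw [Summable.tsum_eq_zero_add (summable_Gf hx hs k n), Gf_zero, zero_add]
  have hLHS : (∑' p : ℕ × ℕ, azeta p.1 (p.2 + 1) * x ^ (p.1 + 1) * s ^ (p.2 + 1))
      = ∑' m : ℕ, F m := by
    rw [tsum_congr hL1]
    exact Summable.tsum_comm' hGsum hsliceAll hsumG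
  -- RHS: T
  set T : ℕ → ℝ := fun m => (ascPochhammer ℝ m).eval x * (ascPochhammer ℝ m).eval (-s)
      / ((ascPochhammer ℝ m).eval (1-s) * (m ! : ℝ)) * (-1:ℝ)^m with hTdef
  have hhyp : hyp2F1 x (-s) (1-s) (-1) = ∑' m : ℕ, T m := rfl
  have hT0 : T 0 = 1 := by
    rw [hTdef]
    simp [ascPochhammer_zero]
  have hkey : ∀ m : ℕ, F (m+1) = -T (m+1) := by
    intro m
    have hMa : 1 ≤ ((m+1:ℕ):ℝ) := hM1 m
    have hMb : 0 < ((m+1:ℕ):ℝ) := hM0 m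
    have hsplit : ∀ p : ℕ × ℕ, f (m+1) p
        = ((-1:ℝ)^(m+1) * hcoef p.1 (m+1) * x^(p.1+1))
            * (s^(p.2+1) / ((m+1:ℕ):ℝ)^(p.2+2)) := by
      rintro ⟨k, n⟩
      show Gf x s k n (m+1) = _
      rw [Gf]
      ring
    have hnorm2 : Summable (fun n : ℕ => ‖s^(n+1) / ((m+1:ℕ):ℝ)^(n+2)‖) :=
      summable_norm_iff.mpr (geo_summable hs hMa)
    have hnorm1 : Summable (fun k : ℕ =>
        ‖(-1:ℝ)^(m+1) * hcoef k (m+1) * x^(k+1)‖) :=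
      summable_norm_iff.mpr (hu_sum _ m)
    have hF1 : F (m+1) = (∑' k : ℕ, (-1:ℝ)^(m+1) * hcoef k (m+1) * x^(k+1))
        * (∑' n : ℕ, s^(n+1) / ((m+1:ℕ):ℝ)^(n+2)) := by
      rw [hFdef]
      simp only
      rw [tsum_congr hsplit]
      exact (tsum_mul_tsum_of_summable_norm hnorm1 hnorm2).symm
    have hu' : ∑' k : ℕ, (-1:ℝ)^(m+1) * hcoef k (m+1) * x^(k+1)
        = (-1:ℝ)^(m+1) * (x * ∏ j ∈ Finset.Ioo 0 (m+1), (1 + x * (j:ℝ)⁻¹)) := by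
      rw [tsum_eq_sum (s := Finset.range (m+1)) (fun k hk => by
        have hk' : m+1 ≤ k := by
          by_contra h; exact hk (Finset.mem_range.mpr (by omega))
        rw [hcoef_eq_zero hk' (Nat.succ_pos m), mul_zero, zero_mul])]
      conv_rhs => rw [← prodForm x m]
      rw [Finset.mul_sum, Finset.mul_sum]
      refine Finset.sum_congr rfl fun k _ => ?_
      ring
    have hv' : ∑' n : ℕ, s^(n+1) / ((m+1:ℕ):ℝ)^(n+2)
        = s / (((m+1:ℕ):ℝ) * (((m+1:ℕ):ℝ) - s)) := geo_tsum hs hMa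
    have hps : (ascPochhammer ℝ (m+1)).eval (-s)
        = (ascPochhammer ℝ m).eval (1-s) * (-s) := by
      rw [poch_prod, poch_prod, Finset.prod_range_succ']
      congr 1
      · refine Finset.prod_congr rfl fun i _ => ?_
        push_cast
        ring
      · norm_num
    have hps1 : (ascPochhammer ℝ (m+1)).eval (1-s)
        = (ascPochhammer ℝ m).eval (1-s) * (((m+1:ℕ):ℝ) - s) := by
      rw [ascPochhammer_succ_eval]
      congr 1
      push_cast
      ring
    have hppos : 0 < (ascPochhammer ℝ m).eval (1-s) :=
      ascPochhammer_pos m _ (by linarith)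
    have hfact : (((m+1)! : ℕ) : ℝ) = ((m+1:ℕ):ℝ) * (m ! : ℝ) := by
      rw [Nat.factorial_succ]
      push_cast
      ring
    have hMs : (0:ℝ) < ((m+1:ℕ):ℝ) - s := by linarith
    rw [hF1, hu', hv', hTdef]
    simp only
    rw [hps, hps1, poch_eq, hfact]
    have hfne : (m ! : ℝ) ≠ 0 := by positivity
    have e2 : ((m:ℝ) + 1) - s ≠ 0 := by push_cast at hMs; linarith
    have e1 : ((m:ℝ) + 1) ≠ 0 := by positivity
    field_simp [hppos.ne', hfne, e1, e2]
  have hTsum : Summable T := by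
    apply (summable_nat_add_iff 1).mp
    have heq : (fun m : ℕ => T (m+1)) = fun m : ℕ => -F (m+1) :=
      funext fun m => by rw [hkey m]; ring
    rw [heq]
    exact ((summable_nat_add_iff 1).mpr hFsum).neg
  rw [hLHS, hhyp, Summable.tsum_eq_zero_add hTsum, hT0]
  rw [Summable.tsum_eq_zero_add hFsum, hF0, zero_add]
  rw [tsum_congr (fun m => hkey m), tsum_neg]
  ring
end

section
/- Define the formal power series Ψ(z) = Σ_{k≥0} E_k(0) z^k, where E_k are the Euler polynomials. Then, as an identity of formal power series in x over the field of rational functions in s (equivalently, coefficientwise in x): Ψ(x/(x+s)) = 2 − ((x+s)/s)·Ψ(x/s). -/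
/-- `E_k(0)`, the value at `0` of the `k`-th Euler polynomial
(defined by `2/(1+eᵗ) = ∑_k E_k(0) tᵏ/k!`), via the explicit formula. -/
noncomputable def eulerZero (k : ℕ) : ℚ :=
  ∑ i ∈ Finset.range (k + 1), (2 : ℚ)⁻¹ ^ i *
    ∑ j ∈ Finset.range (i + 1), (-1 : ℚ) ^ j * (i.choose j : ℚ) * (j : ℚ) ^ k

/-- Formal composition `F ∘ G` of power series (intended for `G` with zero constant
term, in which case `coeff N (G^k) = 0` for `k > N` and the truncation is exact). -/
noncomputable def composePS {K : Type*} [CommRing K] (F G : PowerSeries K) : PowerSeries K :=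
  PowerSeries.mk fun N =>
    ∑ k ∈ Finset.range (N + 1), PowerSeries.coeff (R := K) k F * PowerSeries.coeff (R := K) N (G ^ k)

/-- The formal power series `Ψ(z) = ∑_{k≥0} E_k(0) zᵏ`, over the field `ℚ(s)` of
rational functions (`s = RatFunc.X`). -/
noncomputable def PsiPS : PowerSeries (RatFunc ℚ) :=
  PowerSeries.mk fun k => RatFunc.C (eulerZero k)

/-- The series `Ψ(x/s) = ∑_k E_k(0) xᵏ/sᵏ`, a power series in `x` over `ℚ(s)`. -/
noncomputable def PsiXS : PowerSeries (RatFunc ℚ) :=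
  PowerSeries.mk fun k => RatFunc.C (eulerZero k) * (RatFunc.X)⁻¹ ^ k

/-- The formal expansion `x/(x+s) = ∑_{j≥1} (-1)^{j-1} xʲ/sʲ` as a power series in `x`. -/
noncomputable def xOverXPlusS : PowerSeries (RatFunc ℚ) :=
  PowerSeries.mk fun j => if j = 0 then 0 else (-1 : RatFunc ℚ) ^ (j - 1) * (RatFunc.X)⁻¹ ^ j

open Finset

/-- Alternating finite-difference operator `D i f = ∑_{j≤i} (-1)^j C(i,j) f j`. -/
noncomputable def Dq (i : ℕ) (f : ℕ → ℚ) : ℚ :=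
  ∑ j ∈ Finset.range (i + 1), (-1 : ℚ) ^ j * (i.choose j : ℚ) * f j

lemma Dq_zero (f : ℕ → ℚ) : Dq 0 f = f 0 := by simp [Dq]

lemma Dq_add (i : ℕ) (f g : ℕ → ℚ) :
    Dq i (fun j => f j + g j) = Dq i f + Dq i g := by
  unfold Dq
  rw [← Finset.sum_add_distrib]
  exact Finset.sum_congr rfl fun j _ => by ring

lemma Dq_const_mul (c : ℚ) (i : ℕ) (f : ℕ → ℚ) :
    Dq i (fun j => c * f j) = c * Dq i f := by
  unfold Dq
  rw [Finset.mul_sum]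
  exact Finset.sum_congr rfl fun j _ => by ring

lemma Dq_sum {α : Type*} (S : Finset α) (i : ℕ) (F : α → ℕ → ℚ) :
    Dq i (fun j => ∑ a ∈ S, F a j) = ∑ a ∈ S, Dq i (F a) := by
  unfold Dq
  simp_rw [Finset.mul_sum]
  exact Finset.sum_comm

lemma Dq_succ (i : ℕ) (f : ℕ → ℚ) :
    Dq (i + 1) f = Dq i f - Dq i (fun j => f (j + 1)) := by
  have h1 : Dq (i+1) f
      = ∑ j ∈ range (i+1),
          (-1:ℚ)^(j+1) * ((i.choose j : ℚ) + (i.choose (j+1) : ℚ)) * f (j+1) + f 0 := by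
    rw [Dq, Finset.sum_range_succ']
    simp [Nat.choose_succ_succ]
  have h2 : Dq i f
      = ∑ j ∈ range (i+1), (-1:ℚ)^(j+1) * (i.choose (j+1) : ℚ) * f (j+1) + f 0 := by
    have h3 : Dq i f = ∑ j ∈ range (i+1+1), (-1:ℚ)^j * (i.choose j : ℚ) * f j := by
      rw [Dq, Finset.sum_range_succ (f := fun j => (-1:ℚ)^j * (i.choose j : ℚ) * f j) (n := i+1)]
      simp
    rw [h3, Finset.sum_range_succ']
    simp
  have h4 : ∀ j ∈ range (i+1),
      (-1:ℚ)^(j+1) * ((i.choose j : ℚ) + (i.choose (j+1) : ℚ)) * f (j+1)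
        = (-1:ℚ)^(j+1) * (i.choose (j+1) : ℚ) * f (j+1)
          - (-1:ℚ)^j * (i.choose j : ℚ) * f (j+1) := by
    intro j _
    ring
  rw [h1, Finset.sum_congr rfl h4, Finset.sum_sub_distrib, h2, Dq]
  ring

lemma Dq_mul (i : ℕ) (f : ℕ → ℚ) :
    Dq (i + 1) (fun j => (j : ℚ) * f j) = -((i : ℚ) + 1) * Dq i (fun j => f (j + 1)) := by
  rw [Dq, Finset.sum_range_succ']
  rw [Dq, Finset.mul_sum]
  have h4 : ∀ j ∈ range (i+1),
      (-1:ℚ)^(j+1) * ((i+1).choose (j+1) : ℚ) * (((j:ℚ)+1) * f (j+1))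
        = -((i:ℚ)+1) * ((-1:ℚ)^j * (i.choose j : ℚ) * f (j+1)) := by
    intro j _
    have h := Nat.add_one_mul_choose_eq i j
    have h' : ((i:ℚ)+1) * (i.choose j : ℚ) = ((i+1).choose (j+1) : ℚ) * ((j:ℚ)+1) := by
      exact_mod_cast congrArg (fun n : ℕ => (n : ℚ)) h
    linear_combination (-1:ℚ)^j * f (j+1) * h'
  push_cast
  rw [Finset.sum_congr rfl h4]
  ring

lemma Dq_one {i : ℕ} (hi : i ≠ 0) : Dq i (fun _ => (1:ℚ)) = 0 := by
  have h := Int.alternating_sum_range_choose_of_ne hi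
  have h2 : ((∑ m ∈ range (i + 1), ((-1) ^ m * i.choose m : ℤ) : ℤ) : ℚ) = 0 := by
    rw [h]; simp
  push_cast at h2
  rw [Dq]
  simpa using h2

lemma Dq_pow (k : ℕ) : ∀ i : ℕ, k < i → Dq i (fun j => (j : ℚ) ^ k) = 0 := by
  induction k using Nat.strong_induction_on with
  | _ k ih =>
    intro i hi
    match k with
    | 0 =>
      have e : (fun j : ℕ => ((j:ℚ)) ^ 0) = fun _ => (1:ℚ) := by funext j; simp
      rw [e]
      exact Dq_one (by omega)
    | k + 1 =>
      obtain ⟨i', rfl⟩ : ∃ i', i = i' + 1 := ⟨i - 1, by omega⟩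
      have e1 : (fun j : ℕ => ((j:ℚ)) ^ (k+1)) = fun j : ℕ => (j:ℚ) * (j:ℚ)^k := by
        funext j; rw [pow_succ]; ring
      rw [e1, Dq_mul]
      have e2 : (fun j : ℕ => ((j+1 : ℕ):ℚ) ^ k)
          = fun j : ℕ => ∑ m ∈ range (k+1), ((k.choose m : ℚ)) * ((j:ℚ)^m) := by
        funext j
        push_cast
        rw [add_pow]
        exact Finset.sum_congr rfl fun m hm => by ring
      have e3 : Dq i' (fun j => ((j+1 : ℕ):ℚ) ^ k) = 0 := by
        rw [e2, Dq_sum]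
        refine Finset.sum_eq_zero fun m hm => ?_
        have hm' : m < k + 1 := Finset.mem_range.mp hm
        rw [Dq_const_mul, ih m (by omega) i' (by omega), mul_zero]
      rw [e3, mul_zero]

lemma eulerZero_eq_sum {k M : ℕ} (h : k ≤ M) :
    eulerZero k = ∑ i ∈ Finset.range (M + 1), (2:ℚ)⁻¹ ^ i * Dq i (fun j => (j:ℚ)^k) := by
  rw [eulerZero]
  have e : ∀ i : ℕ, (2 : ℚ)⁻¹ ^ i *
      ∑ j ∈ Finset.range (i + 1), (-1 : ℚ) ^ j * (i.choose j : ℚ) * (j : ℚ) ^ k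
      = (2:ℚ)⁻¹ ^ i * Dq i (fun j => (j:ℚ)^k) := fun i => rfl
  rw [Finset.sum_congr rfl fun i _ => e i]
  refine Finset.sum_subset (Finset.range_subset_range.mpr (by omega)) fun i _ hik => ?_
  have hik' : k < i := by simp only [Finset.mem_range, not_lt] at hik; omega
  rw [Dq_pow k i hik', mul_zero]

lemma eulerKey (M : ℕ) :
    ∑ k ∈ Finset.range (M + 1), eulerZero (k + 1) * ((-1:ℚ) ^ (M - k) * (M.choose k : ℚ))
      = -(eulerZero M + eulerZero (M + 1)) := by
  set hf : ℕ → ℚ := fun j => (j:ℚ) * ((j:ℚ) - 1) ^ M with hhf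
  have hsign : ∀ k, k ≤ M → (-1:ℚ)^(M-k) = (-1:ℚ)^(k+M) := by
    intro k hk
    rw [show k + M = (M-k) + 2*k by omega, pow_add, pow_mul]
    norm_num
  have hexp : ∀ j : ℕ, hf j
      = ∑ k ∈ Finset.range (M+1), ((-1:ℚ)^(M-k) * (M.choose k : ℚ)) * ((j:ℚ)^(k+1)) := by
    intro j
    show (j:ℚ) * ((j:ℚ) - 1) ^ M = _
    rw [sub_pow, Finset.mul_sum]
    refine Finset.sum_congr rfl fun m hm => ?_
    rw [hsign m (by simpa [Nat.lt_succ_iff] using Finset.mem_range.mp hm)]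
    ring
  have hL : ∑ k ∈ Finset.range (M + 1), eulerZero (k + 1) * ((-1:ℚ) ^ (M - k) * (M.choose k : ℚ))
      = ∑ i ∈ Finset.range (M+2), (2:ℚ)⁻¹^i * Dq i hf := by
    have e1 : ∀ k ∈ Finset.range (M+1),
        eulerZero (k + 1) * ((-1:ℚ) ^ (M - k) * (M.choose k : ℚ))
        = ∑ i ∈ Finset.range (M+2),
            (2:ℚ)⁻¹^i * (((-1:ℚ) ^ (M - k) * (M.choose k : ℚ)) * Dq i (fun j => (j:ℚ)^(k+1))) := by
      intro k hk
      rw [eulerZero_eq_sum (M := M+1) (by have := Finset.mem_range.mp hk; omega),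
        Finset.sum_mul]
      exact Finset.sum_congr rfl fun i _ => by ring
    rw [Finset.sum_congr rfl e1, Finset.sum_comm]
    refine Finset.sum_congr rfl fun i _ => ?_
    rw [← Finset.mul_sum]
    congr 1
    have : Dq i hf = Dq i (fun j => ∑ k ∈ Finset.range (M+1),
        ((-1:ℚ)^(M-k) * (M.choose k : ℚ)) * ((j:ℚ)^(k+1))) := by
      congr 1
      funext j
      exact hexp j
    rw [this, Dq_sum]
    exact Finset.sum_congr rfl fun k _ => (Dq_const_mul _ _ _).symm
  have hR : eulerZero M + eulerZero (M+1)
      = ∑ i ∈ Finset.range (M+2), (2:ℚ)⁻¹^i * Dq i (fun j => hf (j+1)) := by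
    rw [eulerZero_eq_sum (M := M+1) (by omega), eulerZero_eq_sum (M := M+1) (le_refl _),
      ← Finset.sum_add_distrib]
    refine Finset.sum_congr rfl fun i _ => ?_
    have : (fun j : ℕ => hf (j+1)) = fun j : ℕ => (j:ℚ)^M + (j:ℚ)^(M+1) := by
      funext j
      rw [hhf]
      push_cast
      ring
    rw [this, Dq_add]
    ring
  rw [hL, hR]
  have tele : ∀ i : ℕ, (2:ℚ)⁻¹^i * Dq i hf + (2:ℚ)⁻¹^i * Dq i (fun j => hf (j+1))
      = (2 * (2:ℚ)⁻¹^i * Dq i hf) - (2 * (2:ℚ)⁻¹^(i+1) * Dq (i+1) hf) := by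
    intro i
    rw [Dq_succ]
    rw [pow_succ]
    ring
  have hsum : ∑ i ∈ Finset.range (M+2),
      ((2:ℚ)⁻¹^i * Dq i hf + (2:ℚ)⁻¹^i * Dq i (fun j => hf (j+1))) = 0 := by
    rw [Finset.sum_congr rfl fun i _ => tele i,
      Finset.sum_range_sub' (fun i => 2 * (2:ℚ)⁻¹^i * Dq i hf) (M+2)]
    have h0 : Dq 0 hf = 0 := by rw [Dq_zero, hhf]; simp
    have hM2 : Dq (M+2) hf = 0 := by
      have : Dq (M+2) hf = Dq (M+2) (fun j => ∑ k ∈ Finset.range (M+1),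
          ((-1:ℚ)^(M-k) * (M.choose k : ℚ)) * ((j:ℚ)^(k+1))) := by
        congr 1; funext j; exact hexp j
      rw [this, Dq_sum]
      refine Finset.sum_eq_zero fun k hk => ?_
      have hk' : k < M + 1 := Finset.mem_range.mp hk
      rw [Dq_const_mul, Dq_pow (k+1) (M+2) (by omega), mul_zero]
    rw [h0, hM2]
    ring
  rw [Finset.sum_add_distrib] at hsum
  linarith

lemma coeff_xOverXPlusS_pow_eq_zero {m N : ℕ} (h : N < m) :
    PowerSeries.coeff (R := RatFunc ℚ) N (xOverXPlusS ^ m) = 0 := by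
  have hd : (PowerSeries.X : PowerSeries (RatFunc ℚ)) ∣ xOverXPlusS := by
    rw [PowerSeries.X_dvd_iff, ← PowerSeries.coeff_zero_eq_constantCoeff]
    simp [xOverXPlusS]
  exact PowerSeries.X_pow_dvd_iff.mp (pow_dvd_pow_of_dvd hd m) N h

lemma coeff_xOverXPlusS_pow (k : ℕ) :
    ∀ d : ℕ, PowerSeries.coeff (R := RatFunc ℚ) (k + 1 + d) (xOverXPlusS ^ (k + 1))
      = (-1 : RatFunc ℚ)^d * ((k+d).choose k : RatFunc ℚ) * (RatFunc.X)⁻¹ ^ (k+1+d) := by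
  induction k with
  | zero =>
    intro d
    rw [pow_one]
    simp [xOverXPlusS, show 0+1+d = d+1 by omega]
  | succ k ih =>
    intro d
    rw [pow_succ, PowerSeries.coeff_mul, Finset.Nat.sum_antidiagonal_eq_sum_range_succ_mk]
    have hzero : ∀ m ∈ Finset.range (k+1+1+d+1), m ∉ Finset.Ico (k+1) (k+1+1+d) →
        PowerSeries.coeff (R := RatFunc ℚ) m (xOverXPlusS ^ (k+1))
          * PowerSeries.coeff (R := RatFunc ℚ) (k+1+1+d - m) xOverXPlusS = 0 := by
      intro m hm hm'
      simp only [Finset.mem_range] at hm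
      simp only [Finset.mem_Ico, not_and, not_lt] at hm'
      rcases lt_or_ge m (k+1) with h | h
      · rw [coeff_xOverXPlusS_pow_eq_zero h, zero_mul]
      · have : m = k+1+1+d := by have := hm' h; omega
        subst this
        simp [xOverXPlusS]
    rw [← Finset.sum_subset (by intro x hx; simp only [Finset.mem_Ico, Finset.mem_range] at *; omega) hzero]
    rw [Finset.sum_Ico_eq_sum_range, show k+1+1+d - (k+1) = d+1 by omega]
    have hterm : ∀ e ∈ Finset.range (d+1),
        PowerSeries.coeff (R := RatFunc ℚ) (k+1+e) (xOverXPlusS ^ (k+1))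
          * PowerSeries.coeff (R := RatFunc ℚ) (k+1+1+d - (k+1+e)) xOverXPlusS
          = ((e+k).choose k : RatFunc ℚ) * ((-1:RatFunc ℚ)^d * (RatFunc.X)⁻¹^(k+1+1+d)) := by
      intro e he
      have he' : e ≤ d := by simpa [Nat.lt_succ_iff] using Finset.mem_range.mp he
      rw [ih e, show k+1+1+d - (k+1+e) = (d-e)+1 by omega]
      have hc : PowerSeries.coeff (R := RatFunc ℚ) ((d-e)+1) xOverXPlusS
          = (-1:RatFunc ℚ)^(d-e) * (RatFunc.X)⁻¹^((d-e)+1) := by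
        simp [xOverXPlusS]
      rw [hc]
      have h1 : (-1:RatFunc ℚ)^e * (-1:RatFunc ℚ)^(d-e) = (-1:RatFunc ℚ)^d := by
        rw [← pow_add]; congr 1; omega
      have h2 : ((RatFunc.X : RatFunc ℚ))⁻¹^(k+1+e) * (RatFunc.X)⁻¹^((d-e)+1)
          = (RatFunc.X : RatFunc ℚ)⁻¹^(k+1+1+d) := by
        rw [← pow_add]; congr 1; omega
      rw [← h1, ← h2, show k+e = e+k by omega]
      ring
    rw [Finset.sum_congr rfl hterm, ← Finset.sum_mul, ← Nat.cast_sum,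
      Nat.sum_range_add_choose d k, show d+k+1 = k+1+d by omega]
    ring

/-- `Ψ(x/(x+s)) = 2 − ((x+s)/s)·Ψ(x/s)` as formal power series in `x` over `ℚ(s)`. -/
theorem psi_transformation :
    composePS PsiPS xOverXPlusS
      = 2 - (PowerSeries.X + PowerSeries.C (R := RatFunc ℚ) RatFunc.X)
          * PowerSeries.C (R := RatFunc ℚ) (RatFunc.X)⁻¹ * PsiXS := by
  have hs : (PowerSeries.C (R := RatFunc ℚ) RatFunc.X) * (PowerSeries.C (R := RatFunc ℚ) (RatFunc.X)⁻¹)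
      = 1 := by
    rw [← map_mul, mul_inv_cancel₀ RatFunc.X_ne_zero, map_one]
  have hsplit : (PowerSeries.X + PowerSeries.C (R := RatFunc ℚ) RatFunc.X)
        * PowerSeries.C (R := RatFunc ℚ) (RatFunc.X)⁻¹ * PsiXS
      = PowerSeries.X * (PowerSeries.C (R := RatFunc ℚ) (RatFunc.X)⁻¹ * PsiXS) + PsiXS := by
    rw [add_mul, add_mul, hs, one_mul, mul_assoc]
  have e0 : eulerZero 0 = 1 := by simp [eulerZero]
  ext N
  simp only [composePS, PowerSeries.coeff_mk]
  rcases N with _ | M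
  · rw [Finset.sum_range_one, pow_zero]
    simp only [PowerSeries.coeff_zero_eq_constantCoeff, map_sub, map_mul, map_add, map_one,
      PowerSeries.constantCoeff_X, PowerSeries.constantCoeff_C, PsiPS, PsiXS,
      PowerSeries.constantCoeff_mk, e0, pow_zero, mul_one, zero_add, map_ofNat]
    rw [mul_inv_cancel₀ RatFunc.X_ne_zero]
    norm_num
  · have hL : ∑ k ∈ Finset.range (M+1+1),
        PowerSeries.coeff (R := RatFunc ℚ) k PsiPS
          * PowerSeries.coeff (R := RatFunc ℚ) (M+1) (xOverXPlusS ^ k)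
        = RatFunc.C (-(eulerZero M + eulerZero (M+1))) * (RatFunc.X : RatFunc ℚ)⁻¹ ^ (M+1) := by
      rw [Finset.sum_range_succ']
      have h0 : PowerSeries.coeff (R := RatFunc ℚ) 0 PsiPS
          * PowerSeries.coeff (R := RatFunc ℚ) (M+1) (xOverXPlusS ^ 0) = 0 := by
        rw [pow_zero]
        simp [PowerSeries.coeff_one]
      rw [h0, add_zero]
      have hterm : ∀ k ∈ Finset.range (M+1),
          PowerSeries.coeff (R := RatFunc ℚ) (k+1) PsiPS
            * PowerSeries.coeff (R := RatFunc ℚ) (M+1) (xOverXPlusS ^ (k+1))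
          = RatFunc.C (eulerZero (k+1) * ((-1:ℚ)^(M-k) * (M.choose k : ℚ)))
              * (RatFunc.X : RatFunc ℚ)⁻¹^(M+1) := by
        intro k hk
        have hk' : k ≤ M := by simpa [Nat.lt_succ_iff] using Finset.mem_range.mp hk
        have hG := coeff_xOverXPlusS_pow k (M-k)
        rw [show k+1+(M-k) = M+1 by omega, show k+(M-k) = M by omega] at hG
        rw [hG, PsiPS, PowerSeries.coeff_mk]
        rw [map_mul, map_mul, map_pow, map_neg, map_one, map_natCast]
        ring
      rw [Finset.sum_congr rfl hterm, ← Finset.sum_mul, ← map_sum, eulerKey]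
    rw [hsplit, hL, map_sub, map_add, PowerSeries.coeff_succ_X_mul, PowerSeries.coeff_C_mul]
    have h2 : PowerSeries.coeff (R := RatFunc ℚ) (M+1) 2 = 0 := by
      rw [← map_ofNat (PowerSeries.C (R := RatFunc ℚ)) 2, PowerSeries.coeff_C]
      simp
    rw [h2, PsiXS, PowerSeries.coeff_mk, PowerSeries.coeff_mk, map_neg, map_add, pow_succ]
    ring
end

section
/- With Ψ(z) = Σ_{k≥0} E_k(0) z^k as a formal power series, the derivative satisfies the transformation Ψ'(x/(x+s)) = −((x+s)/s)²·Ψ(x/s) − ((x+s)/s)³·Ψ'(x/s), as formal power series in x with coefficients in ℚ(s). -/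
noncomputable def Dop (i : ℕ) (f : ℕ → ℚ) : ℚ :=
  ∑ j ∈ Finset.range (i + 1), (-1 : ℚ) ^ j * (i.choose j : ℚ) * f j

lemma Dop_succ (i : ℕ) (f : ℕ → ℚ) :
    Dop (i + 1) f = Dop i f - Dop i (fun j => f (j + 1)) := by
  have B : ∑ x ∈ Finset.range (i+1), (-1:ℚ)^(x+1) * (i.choose (x+1):ℚ) * f (x+1)
      + (-1:ℚ)^0 * (i.choose 0:ℚ) * f 0 = Dop i f := by
    have B0 := Finset.sum_range_succ' (fun j => (-1 : ℚ) ^ j * (i.choose j : ℚ) * f j) (i+1)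
    unfold Dop
    rw [← B0, Finset.sum_range_succ]
    simp [Nat.choose_succ_self]
  have Cc : ∑ x ∈ Finset.range (i+1), (-1:ℚ)^(x+1) * (i.choose x:ℚ) * f (x+1)
      = - Dop i (fun j => f (j + 1)) := by
    unfold Dop
    rw [← Finset.sum_neg_distrib]
    exact Finset.sum_congr rfl fun x _ => by ring
  calc Dop (i+1) f
      = ∑ x ∈ Finset.range (i+1), (-1:ℚ)^(x+1) * ((i+1).choose (x+1):ℚ) * f (x+1)
        + (-1:ℚ)^0 * ((i+1).choose 0 :ℚ) * f 0 :=
        Finset.sum_range_succ' (fun j => (-1 : ℚ) ^ j * ((i+1).choose j : ℚ) * f j) (i+1)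
    _ = (∑ x ∈ Finset.range (i+1), (-1:ℚ)^(x+1) * (i.choose (x+1):ℚ) * f (x+1)
          + (-1:ℚ)^0 * (i.choose 0:ℚ) * f 0)
        + ∑ x ∈ Finset.range (i+1), (-1:ℚ)^(x+1) * (i.choose x:ℚ) * f (x+1) := by
        rw [Finset.sum_congr rfl (fun x _ => by
          rw [Nat.choose_succ_succ]; push_cast; ring :
            ∀ x ∈ Finset.range (i+1), (-1:ℚ)^(x+1) * ((i+1).choose (x+1):ℚ) * f (x+1)
              = (-1:ℚ)^(x+1) * (i.choose (x+1):ℚ) * f (x+1)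
                + (-1:ℚ)^(x+1) * (i.choose x:ℚ) * f (x+1)),
          Finset.sum_add_distrib]
        simp
        ring
    _ = Dop i f - Dop i (fun j => f (j + 1)) := by rw [B, Cc]; ring

lemma Dop_congr (i : ℕ) {f g : ℕ → ℚ} (h : ∀ j, f j = g j) : Dop i f = Dop i g := by
  unfold Dop; exact Finset.sum_congr rfl fun j _ => by rw [h j]

lemma Dop_add (i : ℕ) (f g : ℕ → ℚ) :
    Dop i (fun j => f j + g j) = Dop i f + Dop i g := by
  unfold Dop
  rw [← Finset.sum_add_distrib]
  exact Finset.sum_congr rfl fun j _ => by ring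

/-- push a finite linear combination through `Dop`. -/
lemma Dop_sum {ι : Type*} (i : ℕ) (t : Finset ι) (w : ι → ℚ) (e : ι → ℕ) :
    Dop i (fun j => ∑ x ∈ t, w x * (j : ℚ) ^ (e x))
      = ∑ x ∈ t, w x * Dop i (fun j => (j : ℚ) ^ (e x)) := by
  unfold Dop
  have h1 : ∀ j : ℕ, (-1:ℚ)^j * (i.choose j : ℚ) * (∑ x ∈ t, w x * (j:ℚ)^(e x))
      = ∑ x ∈ t, w x * ((-1:ℚ)^j * (i.choose j : ℚ) * (j:ℚ)^(e x)) := by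
    intro j; rw [Finset.mul_sum]; exact Finset.sum_congr rfl fun x _ => by ring
  rw [Finset.sum_congr rfl fun j _ => h1 j, Finset.sum_comm]
  refine Finset.sum_congr rfl fun x _ => ?_
  rw [Finset.mul_sum]

lemma Dop_shift_pow (i m : ℕ) :
    Dop i (fun j => ((j : ℚ) + 1) ^ m)
      = ∑ t ∈ Finset.range (m + 1), (m.choose t : ℚ) * Dop i (fun j => (j : ℚ) ^ t) := by
  rw [← Dop_sum]
  refine Dop_congr i fun j => ?_
  rw [add_pow]
  exact Finset.sum_congr rfl fun t _ => by ring

lemma Dop_pow_eq_zero : ∀ i m : ℕ, m < i → Dop i (fun j => (j : ℚ) ^ m) = 0 := by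
  intro i
  induction i with
  | zero => intro m hm; omega
  | succ i ih =>
    intro m hm
    have hcast : ∀ j : ℕ, ((j + 1 : ℕ) : ℚ) ^ m = ((j : ℚ) + 1) ^ m := by
      intro j; push_cast; ring
    rw [Dop_succ, Dop_congr i hcast, Dop_shift_pow, Finset.sum_range_succ]
    have hz : ∀ t ∈ Finset.range m, (m.choose t : ℚ) * Dop i (fun j => (j : ℚ) ^ t) = 0 := by
      intro t ht
      rw [ih t (by simp only [Finset.mem_range] at ht; omega)]
      ring
    rw [Finset.sum_eq_zero hz]
    simp only [Nat.choose_self, Nat.cast_one, one_mul, zero_add]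
    ring

lemma eulerZero_eq (n M : ℕ) (h : n ≤ M) :
    eulerZero n = ∑ i ∈ Finset.range (M + 1), (2 : ℚ)⁻¹ ^ i * Dop i (fun j => (j : ℚ) ^ n) := by
  unfold eulerZero Dop
  refine Finset.sum_subset (Finset.range_subset_range.mpr (by omega)) ?_
  intro i hi hni
  have : n < i := by
    simp only [Finset.mem_range] at hi hni; omega
  have := Dop_pow_eq_zero i n this
  unfold Dop at this
  rw [this, mul_zero]

lemma telescope (F : ℕ → ℚ) (M : ℕ) :
    ∑ i ∈ Finset.range (M + 1), (2 : ℚ)⁻¹ ^ i * (2 * F i - F (i + 1))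
      = 2 * F 0 - (2 : ℚ)⁻¹ ^ M * F (M + 1) := by
  induction M with
  | zero => norm_num
  | succ M ih =>
    rw [Finset.sum_range_succ, ih]
    ring

noncomputable def gfun (n : ℕ) (x : ℚ) : ℚ :=
  2 * x ^ 2 * (x - 1) ^ n + (n : ℚ) * x ^ 3 * (x - 1) ^ (n - 1)

lemma binom_q (n : ℕ) (x : ℚ) :
    (x - 1) ^ n = ∑ k ∈ Finset.range (n + 1), x ^ k * (-1 : ℚ) ^ (n - k) * (n.choose k : ℚ) := by
  rw [sub_eq_add_neg, add_pow]

lemma deriv_binom (n : ℕ) (x : ℚ) :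
    ∑ k ∈ Finset.range (n + 1), (k : ℚ) * (n.choose k : ℚ) * (-1 : ℚ) ^ (n - k) * x ^ k
      = (n : ℚ) * x * (x - 1) ^ (n - 1) := by
  cases n with
  | zero => norm_num
  | succ m =>
    rw [Finset.sum_range_succ' _ (m + 1)]
    simp only [Nat.cast_zero, zero_mul, mul_zero, zero_add, add_zero, pow_zero, mul_one]
    have hterm : ∀ k, ((k + 1 : ℕ) : ℚ) * ((m + 1).choose (k + 1) : ℚ) * (-1 : ℚ) ^ (m + 1 - (k + 1)) * x ^ (k + 1)
        = ((m : ℚ) + 1) * x * (x ^ k * (-1 : ℚ) ^ (m - k) * (m.choose k : ℚ)) := by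
      intro k
      have hc : ((m + 1 : ℕ)) * (m.choose k) = ((m + 1).choose (k + 1)) * (k + 1) :=
        Nat.add_one_mul_choose_eq m k
      have hc' : ((m + 1 : ℕ) : ℚ) * (m.choose k : ℚ) = ((m + 1).choose (k + 1) : ℚ) * ((k + 1 : ℕ) : ℚ) := by
        exact_mod_cast congrArg (Nat.cast : ℕ → ℚ) hc
      have hsub : m + 1 - (k + 1) = m - k := by omega
      rw [hsub]
      push_cast at hc' ⊢
      linear_combination (-((-1 : ℚ) ^ (m - k) * x ^ (k + 1))) * hc'
    rw [Finset.sum_congr rfl fun k _ => hterm k, ← Finset.mul_sum, ← binom_q]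
    push_cast
    simp only [Nat.add_sub_cancel]

lemma hsum (n : ℕ) (x : ℚ) :
    ∑ k ∈ Finset.range (n + 2),
        (((k : ℚ) + 1) * (if k = 0 then 0 else (-1 : ℚ) ^ (n + 1 - k) * (n.choose (k - 1) : ℚ)))
          * x ^ (k + 1)
      = gfun n x := by
  rw [Finset.sum_range_succ' _ (n + 1)]
  simp only [Nat.succ_sub_succ, Nat.add_sub_cancel, Nat.sub_zero, Nat.succ_ne_zero, if_false,
    if_true, eq_self_iff_true, mul_zero, zero_mul, add_zero]
  have hterm : ∀ k, (((k + 1 : ℕ) : ℚ) + 1) * ((-1 : ℚ) ^ (n - k) * (n.choose k : ℚ)) * x ^ (k + 1 + 1)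
      = 2 * x ^ 2 * (x ^ k * (-1 : ℚ) ^ (n - k) * (n.choose k : ℚ))
        + x ^ 2 * ((k : ℚ) * (n.choose k : ℚ) * (-1 : ℚ) ^ (n - k) * x ^ k) := by
    intro k; push_cast; ring
  rw [Finset.sum_congr rfl fun k _ => hterm k, Finset.sum_add_distrib, ← Finset.mul_sum,
    ← Finset.mul_sum, ← binom_q, deriv_binom, gfun]
  ring

lemma rsum (n : ℕ) (x : ℚ) :
    (∑ m ∈ Finset.range (n + 2), (Nat.choose 2 m : ℚ) * x ^ (n + 1 - m))
      + ∑ m ∈ Finset.range (n + 2),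
          (Nat.choose 3 m : ℚ) * (((n + 1 - m : ℕ) : ℚ) + 1) * x ^ (n + 1 - m + 1)
      = gfun n (x + 1) := by
  match n with
  | 0 => simp [Finset.sum_range_succ, gfun]; ring
  | 1 => simp [Finset.sum_range_succ, gfun]; ring
  | (n + 2) =>
    have h2s : ∑ m ∈ Finset.range (n + 4), (Nat.choose 2 m : ℚ) * x ^ (n + 3 - m)
        = x ^ (n + 3) + 2 * x ^ (n + 2) + x ^ (n + 1) := by
      rw [Finset.sum_range_succ' _ (n + 3), Finset.sum_range_succ' _ (n + 2),
        Finset.sum_range_succ' _ (n + 1)]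
      have hz : ∀ m ∈ Finset.range (n + 1), (Nat.choose 2 (m + 1 + 1 + 1) : ℚ) * x ^ (n + 3 - (m + 1 + 1 + 1)) = 0 := by
        intro m _
        rw [Nat.choose_eq_zero_of_lt (by omega)]
        norm_num
      rw [Finset.sum_eq_zero hz, show n + 3 - (0 + 1 + 1) = n + 1 from by omega,
        show n + 3 - (0 + 1) = n + 2 from by omega, show n + 3 - 0 = n + 3 from by omega]
      norm_num [Nat.choose]
      ring
    have h3s : ∑ m ∈ Finset.range (n + 4),
          (Nat.choose 3 m : ℚ) * (((n + 3 - m : ℕ) : ℚ) + 1) * x ^ (n + 3 - m + 1)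
        = ((n : ℚ) + 4) * x ^ (n + 4) + 3 * ((n : ℚ) + 3) * x ^ (n + 3)
          + 3 * ((n : ℚ) + 2) * x ^ (n + 2) + ((n : ℚ) + 1) * x ^ (n + 1) := by
      rw [Finset.sum_range_succ' _ (n + 3), Finset.sum_range_succ' _ (n + 2),
        Finset.sum_range_succ' _ (n + 1), Finset.sum_range_succ' _ n]
      have hz : ∀ m ∈ Finset.range n,
          (Nat.choose 3 (m + 1 + 1 + 1 + 1) : ℚ) * (((n + 3 - (m + 1 + 1 + 1 + 1) : ℕ) : ℚ) + 1)
            * x ^ (n + 3 - (m + 1 + 1 + 1 + 1) + 1) = 0 := by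
        intro m _
        rw [Nat.choose_eq_zero_of_lt (by omega)]
        norm_num
      rw [Finset.sum_eq_zero hz, show n + 3 - (0 + 1 + 1 + 1) = n from by omega,
        show n + 3 - (0 + 1 + 1) = n + 1 from by omega,
        show n + 3 - (0 + 1) = n + 2 from by omega, show n + 3 - 0 = n + 3 from by omega]
      norm_num [Nat.choose]
      ring
    rw [h2s, h3s, gfun]
    have : (n + 2 : ℕ) - 1 = n + 1 := by omega
    rw [this]
    push_cast
    ring

lemma gfun_expand (n : ℕ) (x : ℚ) :
    gfun n x = (∑ t ∈ Finset.range (n + 1), (2 * (n.choose t : ℚ) * (-1 : ℚ) ^ (n - t)) * x ^ (t + 2))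
      + ∑ t ∈ Finset.range n, ((n : ℚ) * ((n - 1).choose t : ℚ) * (-1 : ℚ) ^ (n - 1 - t)) * x ^ (t + 3) := by
  have h1 : 2 * x ^ 2 * (x - 1) ^ n
      = ∑ t ∈ Finset.range (n + 1), (2 * (n.choose t : ℚ) * (-1 : ℚ) ^ (n - t)) * x ^ (t + 2) := by
    rw [binom_q, Finset.mul_sum]
    exact Finset.sum_congr rfl fun t _ => by ring
  have h2 : (n : ℚ) * x ^ 3 * (x - 1) ^ (n - 1)
      = ∑ t ∈ Finset.range n, ((n : ℚ) * ((n - 1).choose t : ℚ) * (-1 : ℚ) ^ (n - 1 - t)) * x ^ (t + 3) := by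
    cases n with
    | zero => simp
    | succ m =>
      rw [binom_q, Finset.mul_sum]
      simp only [Nat.succ_sub_one]
      exact Finset.sum_congr rfl fun t _ => by ring
  rw [gfun, h1, h2]

lemma Dop_gfun_zero (n : ℕ) : Dop (n + 3) (fun j => gfun n ((j : ℕ) : ℚ)) = 0 := by
  rw [Dop_congr (n + 3) fun j => gfun_expand n ((j : ℕ) : ℚ), Dop_add, Dop_sum, Dop_sum]
  rw [Finset.sum_eq_zero, Finset.sum_eq_zero]
  · norm_num
  · intro t ht
    rw [Dop_pow_eq_zero (n + 3) (t + 3) (by simp only [Finset.mem_range] at ht; omega)]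
    ring
  · intro t ht
    rw [Dop_pow_eq_zero (n + 3) (t + 2) (by simp only [Finset.mem_range] at ht; omega)]
    ring

lemma Dop_zero_apply (f : ℕ → ℚ) : Dop 0 f = f 0 := by
  unfold Dop; simp

lemma gfun_zero (n : ℕ) : gfun n 0 = 0 := by
  unfold gfun; norm_num

lemma swap_sum {ι : Type*} (t : Finset ι) (w : ι → ℚ) (e : ι → ℕ) (M : ℕ)
    (he : ∀ x ∈ t, e x ≤ M) :
    ∑ x ∈ t, w x * eulerZero (e x)
      = ∑ i ∈ Finset.range (M + 1), (2 : ℚ)⁻¹ ^ i * Dop i (fun j => ∑ x ∈ t, w x * (j : ℚ) ^ (e x)) := by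
  have h1 : ∀ x ∈ t, w x * eulerZero (e x)
      = ∑ i ∈ Finset.range (M + 1), (2 : ℚ)⁻¹ ^ i * (w x * Dop i (fun j => (j : ℚ) ^ (e x))) := by
    intro x hx
    rw [eulerZero_eq (e x) M (he x hx), Finset.mul_sum]
    exact Finset.sum_congr rfl fun i _ => by ring
  rw [Finset.sum_congr rfl h1, Finset.sum_comm]
  exact Finset.sum_congr rfl fun i _ => by rw [Dop_sum, Finset.mul_sum]

lemma keyQ (n : ℕ) :
    ∑ k ∈ Finset.range (n + 2),
        (((k : ℚ) + 1) * (if k = 0 then 0 else (-1 : ℚ) ^ (n + 1 - k) * (n.choose (k - 1) : ℚ)))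
          * eulerZero (k + 1)
      = - (∑ m ∈ Finset.range (n + 2), (Nat.choose 2 m : ℚ) * eulerZero (n + 1 - m))
        - ∑ m ∈ Finset.range (n + 2),
            ((Nat.choose 3 m : ℚ) * (((n + 1 - m : ℕ) : ℚ) + 1)) * eulerZero (n + 1 - m + 1) := by
  have hL := swap_sum (Finset.range (n + 2))
    (fun k => ((k : ℚ) + 1) * (if k = 0 then 0 else (-1 : ℚ) ^ (n + 1 - k) * (n.choose (k - 1) : ℚ)))
    (fun k => k + 1) (n + 2) (fun k hk => by simp only [Finset.mem_range] at hk; show k + 1 ≤ n + 2; omega)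
  have hR2 := swap_sum (Finset.range (n + 2)) (fun m => (Nat.choose 2 m : ℚ))
    (fun m => n + 1 - m) (n + 2) (fun m _ => by show n + 1 - m ≤ n + 2; omega)
  have hR3 := swap_sum (Finset.range (n + 2))
    (fun m => (Nat.choose 3 m : ℚ) * (((n + 1 - m : ℕ) : ℚ) + 1))
    (fun m => n + 1 - m + 1) (n + 2) (fun m _ => by show n + 1 - m + 1 ≤ n + 2; omega)
  rw [hL, hR2, hR3]
  have hper : ∀ i : ℕ,
      Dop i (fun j => ∑ k ∈ Finset.range (n + 2),
          (((k : ℚ) + 1) * (if k = 0 then 0 else (-1 : ℚ) ^ (n + 1 - k) * (n.choose (k - 1) : ℚ)))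
            * (j : ℚ) ^ (k + 1))
        + (Dop i (fun j => ∑ m ∈ Finset.range (n + 2), (Nat.choose 2 m : ℚ) * (j : ℚ) ^ (n + 1 - m))
          + Dop i (fun j => ∑ m ∈ Finset.range (n + 2),
              ((Nat.choose 3 m : ℚ) * (((n + 1 - m : ℕ) : ℚ) + 1)) * (j : ℚ) ^ (n + 1 - m + 1)))
      = 2 * Dop i (fun j => gfun n ((j : ℕ) : ℚ)) - Dop (i + 1) (fun j => gfun n ((j : ℕ) : ℚ)) := by
    intro i
    have e1 : Dop i (fun j => ∑ k ∈ Finset.range (n + 2),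
        (((k : ℚ) + 1) * (if k = 0 then 0 else (-1 : ℚ) ^ (n + 1 - k) * (n.choose (k - 1) : ℚ)))
          * (j : ℚ) ^ (k + 1)) = Dop i (fun j => gfun n ((j : ℕ) : ℚ)) :=
      Dop_congr i fun j => hsum n ((j : ℕ) : ℚ)
    have e2 : Dop i (fun j => ∑ m ∈ Finset.range (n + 2), (Nat.choose 2 m : ℚ) * (j : ℚ) ^ (n + 1 - m))
          + Dop i (fun j => ∑ m ∈ Finset.range (n + 2),
              ((Nat.choose 3 m : ℚ) * (((n + 1 - m : ℕ) : ℚ) + 1)) * (j : ℚ) ^ (n + 1 - m + 1))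
        = Dop i (fun j => gfun n (((j + 1 : ℕ) : ℕ) : ℚ)) := by
      rw [← Dop_add]
      refine Dop_congr i fun j => ?_
      have := rsum n ((j : ℕ) : ℚ)
      push_cast
      push_cast at this
      rw [this]
    rw [e1, e2]
    have e3 := Dop_succ i (fun j => gfun n ((j : ℕ) : ℚ))
    have : Dop i (fun j => gfun n (((j + 1 : ℕ) : ℕ) : ℚ))
        = Dop i (fun j => gfun n ((j : ℕ) : ℚ)) - Dop (i + 1) (fun j => gfun n ((j : ℕ) : ℚ)) := by
      rw [e3]; ring
    rw [this]; ring
  have hcollect : ∀ i ∈ Finset.range (n + 3), True := fun _ _ => trivial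
  have : (∑ i ∈ Finset.range (n + 3), (2 : ℚ)⁻¹ ^ i * Dop i (fun j => ∑ k ∈ Finset.range (n + 2),
          (((k : ℚ) + 1) * (if k = 0 then 0 else (-1 : ℚ) ^ (n + 1 - k) * (n.choose (k - 1) : ℚ)))
            * (j : ℚ) ^ (k + 1)))
      + ((∑ i ∈ Finset.range (n + 3), (2 : ℚ)⁻¹ ^ i * Dop i (fun j => ∑ m ∈ Finset.range (n + 2),
          (Nat.choose 2 m : ℚ) * (j : ℚ) ^ (n + 1 - m)))
        + ∑ i ∈ Finset.range (n + 3), (2 : ℚ)⁻¹ ^ i * Dop i (fun j => ∑ m ∈ Finset.range (n + 2),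
          ((Nat.choose 3 m : ℚ) * (((n + 1 - m : ℕ) : ℚ) + 1)) * (j : ℚ) ^ (n + 1 - m + 1)))
      = 0 := by
    rw [← Finset.sum_add_distrib, ← Finset.sum_add_distrib]
    have : ∀ i ∈ Finset.range (n + 3), (2 : ℚ)⁻¹ ^ i * Dop i (fun j => ∑ k ∈ Finset.range (n + 2),
          (((k : ℚ) + 1) * (if k = 0 then 0 else (-1 : ℚ) ^ (n + 1 - k) * (n.choose (k - 1) : ℚ)))
            * (j : ℚ) ^ (k + 1))
        + ((2 : ℚ)⁻¹ ^ i * Dop i (fun j => ∑ m ∈ Finset.range (n + 2),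
            (Nat.choose 2 m : ℚ) * (j : ℚ) ^ (n + 1 - m))
          + (2 : ℚ)⁻¹ ^ i * Dop i (fun j => ∑ m ∈ Finset.range (n + 2),
            ((Nat.choose 3 m : ℚ) * (((n + 1 - m : ℕ) : ℚ) + 1)) * (j : ℚ) ^ (n + 1 - m + 1)))
        = (2 : ℚ)⁻¹ ^ i * (2 * Dop i (fun j => gfun n ((j : ℕ) : ℚ))
            - Dop (i + 1) (fun j => gfun n ((j : ℕ) : ℚ))) := by
      intro i _
      rw [← hper i]
      ring
    rw [Finset.sum_congr rfl this,
      telescope (fun i => Dop i (fun j => gfun n ((j : ℕ) : ℚ))) (n + 2)]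
    rw [Dop_zero_apply]
    simp only [Nat.cast_zero, gfun_zero, show n + 2 + 1 = n + 3 from rfl, Dop_gfun_zero n]
    ring
  linarith [this]

lemma sum_range_choose_q (t r : ℕ) :
    ∑ m ∈ Finset.range t, (m.choose r : ℚ) = (t.choose (r + 1) : ℚ) := by
  induction t with
  | zero => simp
  | succ t ih =>
    rw [Finset.sum_range_succ, ih, Nat.choose_succ_succ' t r]
    push_cast
    ring

/-- The formal derivative `Ψ'(z) = ∑_{k≥0} (k+1) E_{k+1}(0) zᵏ`. -/
noncomputable def PsiPS' : PowerSeries (RatFunc ℚ) :=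
  PowerSeries.mk fun k => RatFunc.C ((k + 1 : ℚ) * eulerZero (k + 1))

/-- The series `Ψ'(x/s) = ∑_k (k+1) E_{k+1}(0) xᵏ/sᵏ`. -/
noncomputable def PsiXS' : PowerSeries (RatFunc ℚ) :=
  PowerSeries.mk fun k => RatFunc.C ((k + 1 : ℚ) * eulerZero (k + 1)) * (RatFunc.X)⁻¹ ^ k

lemma coeff_G (N : ℕ) :
    PowerSeries.coeff (R := RatFunc ℚ) N xOverXPlusS
      = if N = 0 then 0 else RatFunc.C ((-1 : ℚ) ^ (N - 1)) * (RatFunc.X)⁻¹ ^ N := by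
  rw [xOverXPlusS, PowerSeries.coeff_mk]
  split_ifs with h
  · rfl
  · rw [map_pow, map_neg, map_one]

lemma coeff_G_pow (k : ℕ) (hk : 1 ≤ k) (N : ℕ) :
    PowerSeries.coeff (R := RatFunc ℚ) N (xOverXPlusS ^ k)
      = if N = 0 then 0
        else RatFunc.C ((-1 : ℚ) ^ (N - k) * ((N - 1).choose (k - 1) : ℚ)) * (RatFunc.X)⁻¹ ^ N := by
  induction k generalizing N with
  | zero => omega
  | succ k ih =>
    rcases Nat.eq_zero_or_pos k with hk0 | hk1
    · subst hk0
      rw [pow_one, coeff_G N]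
      split_ifs with h
      · rfl
      · simp [Nat.choose_zero_right]
    · rw [pow_succ, PowerSeries.coeff_mul, Finset.Nat.sum_antidiagonal_eq_sum_range_succ_mk]
      rcases Nat.eq_zero_or_pos N with hN0 | hN1
      · subst hN0
        simp only [Finset.range_one, Finset.sum_singleton, if_pos rfl]
        rw [ih hk1 0, if_pos rfl, zero_mul]
        simp
      · obtain ⟨N', rfl⟩ : ∃ N', N = N' + 1 := ⟨N - 1, by omega⟩
        rw [if_neg (Nat.succ_ne_zero N')]
        have hterm : ∀ m ∈ Finset.range (N' + 1 + 1),
            PowerSeries.coeff (R := RatFunc ℚ) m (xOverXPlusS ^ k)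
              * PowerSeries.coeff (R := RatFunc ℚ) (N' + 1 - m) xOverXPlusS
            = RatFunc.C (if m = 0 then 0 else if N' + 1 - m = 0 then (0 : ℚ)
                else ((-1 : ℚ) ^ (m - k) * ((m - 1).choose (k - 1) : ℚ)) * (-1 : ℚ) ^ (N' + 1 - m - 1))
              * (RatFunc.X)⁻¹ ^ (N' + 1) := by
          intro m hm
          simp only [Finset.mem_range] at hm
          rw [ih hk1 m, coeff_G (N' + 1 - m)]
          by_cases h1 : m = 0
          · subst h1
            rw [if_pos rfl, if_pos rfl, zero_mul, map_zero, zero_mul]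
          · by_cases h2 : N' + 1 - m = 0
            · rw [if_neg h1, if_pos h2, if_neg h1, if_pos h2, map_zero, mul_zero, zero_mul]
            · rw [if_neg h1, if_neg h2, if_neg h1, if_neg h2]
              simp only [map_mul, map_pow, map_neg, map_one]
              have hpow : ((RatFunc.X : RatFunc ℚ))⁻¹ ^ m * ((RatFunc.X : RatFunc ℚ))⁻¹ ^ (N' + 1 - m)
                  = ((RatFunc.X : RatFunc ℚ))⁻¹ ^ (N' + 1) := by
                rw [← pow_add]
                congr 1
                omega
              rw [← hpow]
              ring
        rw [Finset.sum_congr rfl hterm, ← Finset.sum_mul, ← map_sum]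
        congr 2
        · -- the rational number identity
          rw [Finset.sum_range_succ, if_neg (Nat.succ_ne_zero N'), if_pos (by omega),
            Finset.sum_range_succ' _ N', if_pos rfl]
          have hterm2 : ∀ m ∈ Finset.range N',
              (if m + 1 = 0 then 0 else if N' + 1 - (m + 1) = 0 then (0:ℚ)
                else ((-1 : ℚ) ^ (m + 1 - k) * (((m + 1 - 1).choose (k - 1) : ℕ) : ℚ))
                  * (-1 : ℚ) ^ (N' + 1 - (m + 1) - 1))
              = (-1 : ℚ) ^ (N' + 1 - (k + 1)) * ((m.choose (k - 1) : ℕ) : ℚ) := by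
            intro m hm
            simp only [Finset.mem_range] at hm
            rw [if_neg (Nat.succ_ne_zero m), if_neg (by omega)]
            simp only [Nat.add_sub_cancel]
            rcases Nat.lt_or_ge m (k - 1) with hlt | hge
            · rw [Nat.choose_eq_zero_of_lt hlt]
              norm_num
            · have heq : N' + 1 - (k + 1) = (m + 1 - k) + (N' + 1 - (m + 1) - 1) := by omega
              rw [heq, pow_add]
              ring
          rw [Finset.sum_congr rfl hterm2, ← Finset.mul_sum, sum_range_choose_q N' (k - 1)]
          have : k - 1 + 1 = k := by omega
          rw [this]
          simp only [Nat.add_sub_cancel]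
          ring

lemma W_eq :
    (PowerSeries.X + PowerSeries.C (R := RatFunc ℚ) RatFunc.X) * PowerSeries.C (R := RatFunc ℚ) (RatFunc.X)⁻¹
      = 1 + PowerSeries.X * PowerSeries.C (R := RatFunc ℚ) (RatFunc.X)⁻¹ := by
  rw [add_mul, ← map_mul, mul_inv_cancel₀ (RatFunc.X_ne_zero (K := ℚ)), map_one]
  ring

lemma coeff_W_pow (e : ℕ) (m : ℕ) :
    PowerSeries.coeff (R := RatFunc ℚ) m
        ((1 + PowerSeries.X * PowerSeries.C (R := RatFunc ℚ) (RatFunc.X)⁻¹) ^ e)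
      = RatFunc.C ((e.choose m : ℚ)) * (RatFunc.X)⁻¹ ^ m := by
  induction e generalizing m with
  | zero =>
    rw [pow_zero, PowerSeries.coeff_one]
    cases m with
    | zero => simp
    | succ m => simp
  | succ e ih =>
    rw [pow_succ, mul_add, mul_one, map_add, ih m, ← mul_assoc]
    cases m with
    | zero =>
      rw [PowerSeries.coeff_mul_C, PowerSeries.coeff_zero_mul_X, zero_mul, add_zero]
      simp
    | succ m =>
      rw [PowerSeries.coeff_mul_C, PowerSeries.coeff_succ_mul_X, ih m]
      rw [Nat.choose_succ_succ e m]
      push_cast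
      rw [map_add]
      ring

lemma euler0 : eulerZero 0 = 1 := by
  simp [eulerZero, Finset.sum_range_succ]

lemma euler1 : eulerZero 1 = -(1/2 : ℚ) := by
  simp [eulerZero, Finset.sum_range_succ]

/-- `Ψ'(x/(x+s)) = −((x+s)/s)²·Ψ(x/s) − ((x+s)/s)³·Ψ'(x/s)` as formal power series
in `x` over `ℚ(s)`. -/
theorem psi_deriv_transformation :
    composePS PsiPS' xOverXPlusS
      = - ((PowerSeries.X + PowerSeries.C (R := RatFunc ℚ) RatFunc.X)
            * PowerSeries.C (R := RatFunc ℚ) (RatFunc.X)⁻¹) ^ 2 * PsiXS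
        - ((PowerSeries.X + PowerSeries.C (R := RatFunc ℚ) RatFunc.X)
            * PowerSeries.C (R := RatFunc ℚ) (RatFunc.X)⁻¹) ^ 3 * PsiXS' := by
  rw [W_eq]
  refine PowerSeries.ext fun N => ?_
  rw [composePS, PowerSeries.coeff_mk, map_sub, neg_mul, map_neg, PowerSeries.coeff_mul,
    PowerSeries.coeff_mul, Finset.Nat.sum_antidiagonal_eq_sum_range_succ_mk,
    Finset.Nat.sum_antidiagonal_eq_sum_range_succ_mk]
  cases N with
  | zero =>
    simp only [Finset.range_one, Finset.sum_singleton, pow_zero]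
    rw [coeff_W_pow 2 0, coeff_W_pow 3 0]
    simp only [PowerSeries.coeff_one, if_pos rfl, pow_zero, mul_one, PsiPS', PsiXS, PsiXS',
      PowerSeries.coeff_mk, Nat.cast_zero, Nat.sub_zero, reduceIte]
    rw [← map_mul, ← map_mul, ← map_neg, ← map_sub]
    norm_num [euler0, euler1]
  | succ n =>
    have hL : ∀ k ∈ Finset.range (n + 2),
        PowerSeries.coeff (R := RatFunc ℚ) k PsiPS' * PowerSeries.coeff (R := RatFunc ℚ) (n + 1) (xOverXPlusS ^ k)
          = RatFunc.C ((((k : ℚ) + 1) * (if k = 0 then 0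
              else (-1 : ℚ) ^ (n + 1 - k) * (n.choose (k - 1) : ℚ))) * eulerZero (k + 1))
            * (RatFunc.X)⁻¹ ^ (n + 1) := by
      intro k _
      rcases Nat.eq_zero_or_pos k with rfl | hk1
      · rw [pow_zero, PowerSeries.coeff_one, if_neg (Nat.succ_ne_zero n), if_pos rfl]
        simp
      · rw [coeff_G_pow k hk1 (n + 1), if_neg (Nat.succ_ne_zero n), if_neg (by omega)]
        rw [PsiPS', PowerSeries.coeff_mk, ← mul_assoc, ← map_mul]
        congr 2
        push_cast
        ring
    have hR2 : ∀ m ∈ Finset.range (n + 2),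
        PowerSeries.coeff (R := RatFunc ℚ) m ((1 + PowerSeries.X * PowerSeries.C (R := RatFunc ℚ) (RatFunc.X)⁻¹) ^ 2)
            * PowerSeries.coeff (R := RatFunc ℚ) (n + 1 - m) PsiXS
          = RatFunc.C ((Nat.choose 2 m : ℚ) * eulerZero (n + 1 - m)) * (RatFunc.X)⁻¹ ^ (n + 1) := by
      intro m hm
      simp only [Finset.mem_range] at hm
      rw [coeff_W_pow 2 m, PsiXS, PowerSeries.coeff_mk]
      rw [show ((RatFunc.X : RatFunc ℚ))⁻¹ ^ (n + 1) = (RatFunc.X : RatFunc ℚ)⁻¹ ^ m * (RatFunc.X : RatFunc ℚ)⁻¹ ^ (n + 1 - m) by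
        rw [← pow_add]; congr 1; omega, map_mul]
      ring
    have hR3 : ∀ m ∈ Finset.range (n + 2),
        PowerSeries.coeff (R := RatFunc ℚ) m ((1 + PowerSeries.X * PowerSeries.C (R := RatFunc ℚ) (RatFunc.X)⁻¹) ^ 3)
            * PowerSeries.coeff (R := RatFunc ℚ) (n + 1 - m) PsiXS'
          = RatFunc.C (((Nat.choose 3 m : ℚ) * (((n + 1 - m : ℕ) : ℚ) + 1)) * eulerZero (n + 1 - m + 1))
            * (RatFunc.X)⁻¹ ^ (n + 1) := by
      intro m hm
      simp only [Finset.mem_range] at hm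
      rw [coeff_W_pow 3 m, PsiXS', PowerSeries.coeff_mk, map_mul, map_mul, map_mul]
      rw [show ((RatFunc.X : RatFunc ℚ))⁻¹ ^ (n + 1) = (RatFunc.X : RatFunc ℚ)⁻¹ ^ m * (RatFunc.X : RatFunc ℚ)⁻¹ ^ (n + 1 - m) by
        rw [← pow_add]; congr 1; omega]
      ring
    rw [Finset.sum_congr rfl hL, Finset.sum_congr rfl hR2, Finset.sum_congr rfl hR3,
      ← Finset.sum_mul, ← Finset.sum_mul, ← Finset.sum_mul, ← map_sum, ← map_sum, ← map_sum,
      keyQ n, map_sub, map_neg]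
    ring
end
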